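/- arXiv:2205.14279 — 6 statements merged into one kernel-verified Lean document; each statement's English description precedes it below -/
import Mathlib

section
/- Let φ: (A,m,K) → (B,n,L) be a local homomorphism of noetherian local rings. Then φ is basically regular if and only if rd(φ) = 0, if and only if edim(B) = edim(A) + edim(B/mB), if and only if δ_A(I) = δ_B^φ(I) for every proper ideal I of A. -/
set_option maxHeartbeats 1000000


open IsLocalRing

section Prelim

variable {A : Type*} [CommRing A] [IsLocalRing A]
variable {B : Type*} [CommRing B] [IsLocalRing B]

/-- The embedding dimension of a local ring: `dim_K m/m²`. -/
noncomputable def edim (A : Type*) [CommRing A] [IsLocalRing A] : ℕ :=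
  Module.finrank (ResidueField A) (CotangentSpace A)

/-- `δ_A(I) = dim_K (I + m²)/m²`, realized as the dimension of the image of `I` in `m/m²`. -/
noncomputable def delta (I : Ideal A) : ℕ :=
  Module.finrank (ResidueField A)
    (Submodule.span (ResidueField A)
      ((maximalIdeal A).toCotangent '' {x : maximalIdeal A | (x : A) ∈ I}))

/-- `x₁, …, x_r ∈ I` form part of a minimal basis of `I`: their images in `I/mI` are
linearly independent over the residue field. -/
def IsPartOfMinBasis {r : ℕ} (I : Ideal A) (x : Fin r → A) : Prop :=
  (∀ i, x i ∈ I) ∧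
    ∀ c : Fin r → A, (∑ i, c i * x i) ∈ maximalIdeal A * I → ∀ i, c i ∈ maximalIdeal A

/-- `x₁, …, x_r` form a minimal basis (minimal generating set) of `I`. -/
def IsMinBasis {r : ℕ} (I : Ideal A) (x : Fin r → A) : Prop :=
  IsPartOfMinBasis I x ∧ Ideal.span (Set.range x) = I

theorem map_mem_maximalIdeal (φ : A →+* B) [IsLocalHom φ] {a : A}
    (ha : a ∈ maximalIdeal A) : φ a ∈ maximalIdeal B :=
  fun h => ha (IsLocalHom.map_nonunit a h)

/-- The map `m/m² → n/n²` induced by a local homomorphism, as a `ℤ`-linear map. -/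
noncomputable def gmap (φ : A →+* B) [IsLocalHom φ] :
    (maximalIdeal A).Cotangent →ₗ[ℤ] (maximalIdeal B).Cotangent :=
  Ideal.mapCotangent (R := ℤ) (maximalIdeal A) (maximalIdeal B) φ.toIntAlgHom
    (fun _ ha => map_mem_maximalIdeal φ ha)

/-- The natural `K`-linear map `m/m² → n/n²` induced by a local homomorphism, where `n/n²` is
viewed as a `K`-vector space via the induced map of residue fields `K → L`. -/
noncomputable def cotangentMap (φ : A →+* B) [IsLocalHom φ] :
    letI : Module (ResidueField A) (CotangentSpace B) :=
      Module.compHom _ (ResidueField.map φ)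
    CotangentSpace A →ₗ[ResidueField A] CotangentSpace B :=
  letI : Module (ResidueField A) (CotangentSpace B) :=
    Module.compHom _ (ResidueField.map φ)
  { toFun := gmap φ
    map_add' := fun x y => map_add (gmap φ) x y
    map_smul' := by
      intro k x
      obtain ⟨a, rfl⟩ := IsLocalRing.residue_surjective k
      obtain ⟨m, rfl⟩ := Ideal.toCotangent_surjective _ x
      show gmap φ ((residue A a) • (maximalIdeal A).toCotangent m) =
        (ResidueField.map φ (residue A a)) • gmap φ ((maximalIdeal A).toCotangent m)
      rw [ResidueField.map_residue]
      have h1 : (residue A a) • (maximalIdeal A).toCotangent m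
          = (maximalIdeal A).toCotangent (a • m) := rfl
      have h2 : (residue B (φ a)) • (maximalIdeal B).toCotangent
            ⟨φ m, map_mem_maximalIdeal φ m.2⟩
          = (maximalIdeal B).toCotangent
            ((φ a) • ⟨φ m, map_mem_maximalIdeal φ m.2⟩) := rfl
      have h3 : gmap φ ((maximalIdeal A).toCotangent m) =
          (maximalIdeal B).toCotangent ⟨φ m, map_mem_maximalIdeal φ m.2⟩ :=
        Ideal.mapCotangent_toCotangent _ _ _ _ m
      have h4 : gmap φ ((maximalIdeal A).toCotangent (a • m)) =
          (maximalIdeal B).toCotangent ⟨φ (a • m), map_mem_maximalIdeal φ (a • m).2⟩ :=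
        Ideal.mapCotangent_toCotangent _ _ _ _ (a • m)
      rw [h1, h4, h3, h2]
      congr 1
      ext
      exact map_mul φ a m }

/-- The regularity defect `rd(φ)`: the nullity (dimension over `L` of the kernel) of the
natural `L`-linear map `L ⊗_K m/m² → n/n²` induced by `φ`. -/
noncomputable def rd (φ : A →+* B) [IsLocalHom φ] : ℕ :=
  letI : Algebra (ResidueField A) (ResidueField B) := (ResidueField.map φ).toAlgebra
  letI : Module (ResidueField A) (CotangentSpace B) :=
    Module.compHom _ (ResidueField.map φ)
  letI : IsScalarTower (ResidueField A) (ResidueField B) (CotangentSpace B) :=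
    IsScalarTower.of_algebraMap_smul fun _ _ => rfl
  Module.finrank (ResidueField B)
    (LinearMap.ker (LinearMap.liftBaseChange (ResidueField B) (cotangentMap φ)))

/-- `φ` is basically regular: every minimal basis of `m` is mapped by `φ` to part of a
minimal basis of `n`. -/
def BasicallyRegular (φ : A →+* B) : Prop :=
  ∀ (r : ℕ) (x : Fin r → A), IsMinBasis (maximalIdeal A) x →
    IsPartOfMinBasis (maximalIdeal B) (fun i => φ (x i))

instance quotIsLocalRing (I : Ideal A) [Nontrivial (A ⧸ I)] : IsLocalRing (A ⧸ I) :=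
  IsLocalRing.of_surjective' _ Ideal.Quotient.mk_surjective

instance quotMkIsLocalHom (I : Ideal A) [Nontrivial (A ⧸ I)] :
    IsLocalHom (Ideal.Quotient.mk I) :=
  IsLocalHom.of_surjective _ Ideal.Quotient.mk_surjective

instance mapQuotNontrivial (φ : A →+* B) [IsLocalHom φ] (I : Ideal A) [Nontrivial (A ⧸ I)] :
    Nontrivial (B ⧸ I.map φ) := by
  refine Ideal.Quotient.nontrivial_iff.mpr fun h => ?_
  have hI : I ≠ ⊤ := by
    intro hI
    exact one_ne_zero ((Ideal.Quotient.eq_zero_iff_mem.mpr (hI ▸ Submodule.mem_top)).symm.trans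
      (map_one (Ideal.Quotient.mk I))).symm
  have hle : I.map φ ≤ maximalIdeal B := by
    rw [Ideal.map_le_iff_le_comap]
    exact fun a ha => map_mem_maximalIdeal φ (IsLocalRing.le_maximalIdeal hI ha)
  exact (maximalIdeal.isMaximal B).ne_top (top_le_iff.mp (h ▸ hle))

instance quotientMapIsLocalHom (φ : A →+* B) [IsLocalHom φ] {I : Ideal A} {J : Ideal B}
    {h : I ≤ J.comap φ} [Nontrivial (B ⧸ J)] :
    IsLocalHom (Ideal.quotientMap J φ h) := by
  constructor
  intro x hx
  obtain ⟨a, rfl⟩ := Ideal.Quotient.mk_surjective x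
  rw [Ideal.quotientMap_mk] at hx
  exact ((IsLocalHom.map_nonunit a (IsLocalHom.map_nonunit (φ a) hx))).map
    (Ideal.Quotient.mk I)

instance maxPowQuotNontrivial : Nontrivial (B ⧸ (maximalIdeal B) ^ 2) :=
  Ideal.Quotient.nontrivial_iff.mpr fun h =>
    (maximalIdeal.isMaximal B).ne_top (top_le_iff.mp (h ▸ Ideal.pow_le_self two_ne_zero))

/-- A local ring is regular when its Krull dimension equals its embedding dimension. -/
def IsRegularLocal (A : Type*) [CommRing A] [IsLocalRing A] : Prop :=
  ringKrullDim A = (edim A : WithBot (WithTop ℕ))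

end Prelim


section MyAux

open Module Submodule

/-- Dimension is unchanged when restricting scalars along a surjective field hom. -/
lemma my_finrank_compHom {K₁ K₂ : Type*} [Field K₁] [Field K₂] (σ : K₁ →+* K₂)
    (hσ : Function.Surjective σ) (M : Type*) [AddCommGroup M] [Module K₂ M]
    [Module.Finite K₂ M] :
    letI : Module K₁ M := Module.compHom M σ
    Module.finrank K₁ M = Module.finrank K₂ M := by
  letI : Module K₁ M := Module.compHom M σ
  have hsm : ∀ (k : K₁) (m : M), k • m = σ k • m := fun _ _ => rfl
  set b := Module.finBasis K₂ M with hb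
  have hli : LinearIndependent K₁ (fun i => b i) := by
    rw [Fintype.linearIndependent_iff]
    intro g hg i
    have h0 : ∑ i, σ (g i) • b i = 0 := by
      rw [← hg]; exact Finset.sum_congr rfl fun i _ => (hsm _ _).symm
    have := Fintype.linearIndependent_iff.mp b.linearIndependent _ h0 i
    exact σ.injective (by rw [this, map_zero])
  have hsp : ⊤ ≤ Submodule.span K₁ (Set.range fun i => b i) := by
    intro m _
    choose g hg using fun i => hσ (b.repr m i)
    have : ∑ i, b.repr m i • b i = m := b.sum_repr m
    rw [← this]
    refine Submodule.sum_mem _ fun i _ => ?_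
    rw [← hg i, ← hsm]
    exact Submodule.smul_mem _ _ (Submodule.subset_span ⟨i, rfl⟩)
  rw [Module.finrank_eq_card_basis (Basis.mk hli hsp), Fintype.card_fin]

lemma my_span_one_tmul {K₂ L₂ M : Type*} [Field K₂] [Field L₂] [Algebra K₂ L₂]
    [AddCommGroup M] [Module K₂ M] :
    Submodule.span L₂ (Set.range fun m : M => (1 : L₂) ⊗ₜ[K₂] m) = ⊤ := by
  rw [eq_top_iff]
  intro z _
  induction z using TensorProduct.induction_on with
  | zero => exact zero_mem _
  | tmul l m =>
      have : l ⊗ₜ[K₂] m = l • ((1 : L₂) ⊗ₜ[K₂] m) := by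
        rw [TensorProduct.smul_tmul', smul_eq_mul, mul_one]
      rw [this]
      exact Submodule.smul_mem _ _ (Submodule.subset_span ⟨m, rfl⟩)
  | add x y hx hy => exact add_mem (hx trivial) (hy trivial)

lemma my_one_tmul_mem_span {K₂ L₂ M : Type*} [Field K₂] [Field L₂] [Algebra K₂ L₂]
    [AddCommGroup M] [Module K₂ M] (s : Set M) {v : M} (hv : v ∈ Submodule.span K₂ s) :
    (1 : L₂) ⊗ₜ[K₂] v ∈ Submodule.span L₂ ((fun m : M => (1 : L₂) ⊗ₜ[K₂] m) '' s) := by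
  induction hv using Submodule.span_induction with
  | mem x hx => exact Submodule.subset_span ⟨x, hx, rfl⟩
  | zero => rw [TensorProduct.tmul_zero]; exact zero_mem _
  | add x y _ _ hx hy => rw [TensorProduct.tmul_add]; exact add_mem hx hy
  | smul k x _ hx =>
      rw [TensorProduct.tmul_smul]
      exact Submodule.smul_of_tower_mem _ k hx

open TensorProduct in
/-- `dim_L span_L (1 ⊗ s) = dim_K span_K s`. -/
lemma my_finrank_span_baseChange {K₂ L₂ M : Type*} [Field K₂] [Field L₂] [Algebra K₂ L₂]
    [AddCommGroup M] [Module K₂ M] (s : Set M) :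
    Module.finrank L₂
        (Submodule.span L₂ ((fun m : M => (1 : L₂) ⊗ₜ[K₂] m) '' s))
      = Module.finrank K₂ (Submodule.span K₂ s) := by
  set W := Submodule.span K₂ s with hW
  set j : L₂ ⊗[K₂] W →ₗ[L₂] L₂ ⊗[K₂] M := LinearMap.baseChange L₂ W.subtype with hj
  have hjinj : Function.Injective j := by
    rw [hj, LinearMap.baseChange_eq_ltensor]
    exact Module.Flat.lTensor_preserves_injective_linearMap _ (Submodule.injective_subtype W)
  have hjr : LinearMap.range j = Submodule.span L₂ ((fun m : M => (1 : L₂) ⊗ₜ[K₂] m) '' s) := by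
    rw [LinearMap.range_eq_map, ← my_span_one_tmul (K₂ := K₂) (L₂ := L₂) (M := W),
      Submodule.map_span]
    apply le_antisymm
    · rw [Submodule.span_le]
      rintro _ ⟨_, ⟨w, rfl⟩, rfl⟩
      have : j ((1 : L₂) ⊗ₜ[K₂] w) = (1 : L₂) ⊗ₜ[K₂] (w : M) := by
        rw [hj, LinearMap.baseChange_tmul]; rfl
      rw [this]
      exact my_one_tmul_mem_span s w.2
    · rw [Submodule.span_le]
      rintro _ ⟨v, hv, rfl⟩
      refine Submodule.subset_span ⟨(1 : L₂) ⊗ₜ[K₂] (⟨v, Submodule.subset_span hv⟩ : W),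
        ⟨⟨v, Submodule.subset_span hv⟩, rfl⟩, ?_⟩
      rw [hj, LinearMap.baseChange_tmul]; rfl
  rw [← hjr, ← LinearEquiv.finrank_eq (LinearEquiv.ofInjective j hjinj),
    Module.finrank_baseChange]

variable {R : Type*} [CommRing R] [IsLocalRing R]

lemma my_toCotangent_sum {r : ℕ} (c : Fin r → R) (y : Fin r → maximalIdeal R) :
    (maximalIdeal R).toCotangent (∑ i, c i • y i)
      = ∑ i, residue R (c i) • (maximalIdeal R).toCotangent (y i) := by
  rw [map_sum]
  exact Finset.sum_congr rfl fun i _ => by rw [map_smul]; rfl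

lemma my_isPartOfMinBasis_iff {r : ℕ} (x : Fin r → R) (hx : ∀ i, x i ∈ maximalIdeal R) :
    IsPartOfMinBasis (maximalIdeal R) x ↔
      LinearIndependent (ResidueField R)
        (fun i => (maximalIdeal R).toCotangent ⟨x i, hx i⟩) := by
  have hsub : ∀ c : Fin r → R,
      (⟨∑ i, c i * x i, Ideal.sum_mem _ fun i _ => Ideal.mul_mem_left _ _ (hx i)⟩ :
        maximalIdeal R) = ∑ i, c i • (⟨x i, hx i⟩ : maximalIdeal R) := by
    intro c
    ext
    simp [Finset.sum_apply']
  rw [Fintype.linearIndependent_iff]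
  constructor
  · rintro ⟨-, h⟩ g hg i
    choose c hc using fun i => residue_surjective (g i)
    have hsum : (maximalIdeal R).toCotangent
        ⟨∑ i, c i * x i, Ideal.sum_mem _ fun i _ => Ideal.mul_mem_left _ _ (hx i)⟩ = 0 := by
      rw [hsub, my_toCotangent_sum]
      simp only [hc]
      exact hg
    have hmem : (∑ i, c i * x i) ∈ maximalIdeal R * maximalIdeal R := by
      have := (Ideal.toCotangent_eq_zero _ _).mp hsum
      rwa [pow_two] at this
    have := h c hmem i
    rw [← hc i]
    exact Ideal.Quotient.eq_zero_iff_mem.mpr this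
  · intro h
    refine ⟨hx, fun c hc i => ?_⟩
    have hmem : (∑ i, c i * x i) ∈ (maximalIdeal R) ^ 2 := by rwa [pow_two]
    have hsum : ∑ i, residue R (c i) • (maximalIdeal R).toCotangent ⟨x i, hx i⟩ = 0 := by
      rw [← my_toCotangent_sum, ← hsub]
      exact (Ideal.toCotangent_eq_zero _ _).mpr hmem
    exact Ideal.Quotient.eq_zero_iff_mem.mp (h _ hsum i)

lemma my_span_iff [IsNoetherianRing R] {r : ℕ} (x : Fin r → R)
    (hx : ∀ i, x i ∈ maximalIdeal R) :
    Ideal.span (Set.range x) = maximalIdeal R ↔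
      Submodule.span (ResidueField R)
        (Set.range fun i => (maximalIdeal R).toCotangent ⟨x i, hx i⟩) = ⊤ := by
  set y : Fin r → maximalIdeal R := fun i => ⟨x i, hx i⟩ with hy
  have himg : (Set.range fun i => (maximalIdeal R).toCotangent ⟨x i, hx i⟩)
      = (maximalIdeal R).toCotangent '' Set.range y := by
    rw [← Set.range_comp]; rfl
  rw [himg, IsLocalRing.CotangentSpace.span_image_eq_top_iff]
  have hmap : Submodule.map (maximalIdeal R).subtype (Submodule.span R (Set.range y))
      = Ideal.span (Set.range x) := by
    rw [Submodule.map_span]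
    congr 1
    rw [← Set.range_comp]; rfl
  constructor
  · intro h
    apply Submodule.map_injective_of_injective (Submodule.injective_subtype (maximalIdeal R))
    rw [hmap, h, Submodule.map_top, Submodule.range_subtype]
  · intro h
    rw [← hmap, h, Submodule.map_top, Submodule.range_subtype]

lemma my_exists_minBasis [IsNoetherianRing R] :
    ∃ (x : Fin (edim R) → R) (hx : ∀ i, x i ∈ maximalIdeal R)
      (b : Basis (Fin (edim R)) (ResidueField R) (CotangentSpace R)),
        IsMinBasis (maximalIdeal R) x ∧
        ∀ i, b i = (maximalIdeal R).toCotangent ⟨x i, hx i⟩ := by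
  unfold edim
  set b := Module.finBasis (ResidueField R) (CotangentSpace R) with hbdef
  choose m hm using fun i => (maximalIdeal R).toCotangent_surjective (b i)
  refine ⟨fun i => (m i : R), fun i => (m i).2, b, ⟨?_, ?_⟩, fun i => ?_⟩
  · rw [my_isPartOfMinBasis_iff _ (fun i => (m i).2)]
    have : (fun i => (maximalIdeal R).toCotangent ⟨(m i : R), (m i).2⟩) = fun i => b i := by
      funext i
      rw [← hm i]
    rw [this]
    exact b.linearIndependent
  · rw [my_span_iff _ (fun i => (m i).2)]
    have : (fun i => (maximalIdeal R).toCotangent ⟨(m i : R), (m i).2⟩) = fun i => b i := by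
      funext i
      rw [← hm i]
    rw [this]
    exact b.span_eq
  · rw [← hm i]

end MyAux

variable {A : Type*} [CommRing A] [IsLocalRing A] [IsNoetherianRing A]
variable {B : Type*} [CommRing B] [IsLocalRing B] [IsNoetherianRing B]

/-- Theorem br:th1. -/
theorem stmt10 (φ : A →+* B) [IsLocalHom φ] :
    (BasicallyRegular φ ↔ rd φ = 0) ∧
    (BasicallyRegular φ ↔ edim B = edim A + edim (B ⧸ (maximalIdeal A).map φ)) ∧
    (BasicallyRegular φ ↔ ∀ (I : Ideal A), I ≠ ⊤ → delta I = delta (I.map φ)) := by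
  classical
  letI : Algebra (ResidueField A) (ResidueField B) := (ResidueField.map φ).toAlgebra
  letI : Module (ResidueField A) (CotangentSpace B) :=
    Module.compHom _ (ResidueField.map φ)
  letI : IsScalarTower (ResidueField A) (ResidueField B) (CotangentSpace B) :=
    IsScalarTower.of_algebraMap_smul fun _ _ => rfl
  set ψ := LinearMap.liftBaseChange (ResidueField B) (cotangentMap φ) with hψdef
  have hrd : rd φ = Module.finrank (ResidueField B) (LinearMap.ker ψ) := rfl
  have hψ1 : ∀ v : maximalIdeal A,
      ψ ((1 : ResidueField B) ⊗ₜ (maximalIdeal A).toCotangent v)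
        = (maximalIdeal B).toCotangent ⟨φ v, map_mem_maximalIdeal φ v.2⟩ := by
    intro v
    rw [hψdef, LinearMap.liftBaseChange_tmul, one_smul]
    rfl
  have key3 : ∀ I : Ideal A, I ≤ maximalIdeal A →
      Submodule.span (ResidueField B)
          ((maximalIdeal B).toCotangent '' {x : maximalIdeal B | (x : B) ∈ I.map φ})
        = Submodule.map ψ (Submodule.span (ResidueField B)
            ((fun v : CotangentSpace A => (1 : ResidueField B) ⊗ₜ v) ''
              ((maximalIdeal A).toCotangent '' {x : maximalIdeal A | (x : A) ∈ I}))) := by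
    intro I hI
    apply le_antisymm
    · rw [Submodule.span_le]
      rintro _ ⟨⟨z, hzn⟩, hzJ, rfl⟩
      rw [Ideal.map] at hzJ
      obtain ⟨k, f, g, hg⟩ := Submodule.mem_span_set'.mp hzJ
      choose a ha hφa using fun i => (g i).2
      have hz' : (⟨z, hzn⟩ : maximalIdeal B)
          = ∑ i, f i • ⟨φ (a i), map_mem_maximalIdeal φ (hI (ha i))⟩ := by
        ext
        rw [← hg]
        simp only [AddSubmonoidClass.coe_finset_sum, SetLike.mk_smul_mk, smul_eq_mul]
        exact Finset.sum_congr rfl fun i _ => by rw [← hφa i]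
      rw [hz', map_sum]
      refine Submodule.sum_mem _ fun i _ => ?_
      rw [map_smul]
      refine Submodule.smul_of_tower_mem _ (f i) ?_
      have hmem : (⟨a i, hI (ha i)⟩ : maximalIdeal A) ∈ {x : maximalIdeal A | (x : A) ∈ I} :=
        ha i
      have := hψ1 ⟨a i, hI (ha i)⟩
      rw [← this]
      exact Submodule.mem_map_of_mem
        (Submodule.subset_span ⟨_, ⟨_, hmem, rfl⟩, rfl⟩)
    · rw [Submodule.map_span, Submodule.span_le]
      rintro _ ⟨_, ⟨_, ⟨mm, hmI, rfl⟩, rfl⟩, rfl⟩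
      rw [hψ1 mm]
      exact Submodule.subset_span
        ⟨⟨φ mm, map_mem_maximalIdeal φ mm.2⟩, Ideal.mem_map_of_mem φ hmI, rfl⟩
  -- the universal set
  have hSm : {x : maximalIdeal A | (x : A) ∈ maximalIdeal A} = Set.univ := by
    ext x; simpa using x.2
  have htopA : ((maximalIdeal A).toCotangent '' {x : maximalIdeal A | (x : A) ∈ maximalIdeal A})
      = Set.univ := by
    rw [hSm, Set.image_univ, Set.range_eq_univ]
    exact Ideal.toCotangent_surjective _
  have hrange : LinearMap.range ψ
      = Submodule.span (ResidueField B) ((maximalIdeal B).toCotangent ''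
          {x : maximalIdeal B | (x : B) ∈ (maximalIdeal A).map φ}) := by
    rw [key3 _ le_rfl, htopA, Set.image_univ, my_span_one_tmul, Submodule.map_top]
  have hδm : delta (maximalIdeal A) = edim A := by
    unfold delta edim
    rw [htopA, Submodule.span_univ, finrank_top]
  have hδJ : delta ((maximalIdeal A).map φ)
      = Module.finrank (ResidueField B) (LinearMap.range ψ) := by
    unfold delta
    rw [hrange]
  have hfinA : Module.finrank (ResidueField B)
      (TensorProduct (ResidueField A) (ResidueField B) (CotangentSpace A)) = edim A := by
    rw [Module.finrank_baseChange]; rfl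
  haveI : Module.Finite (ResidueField B)
      (TensorProduct (ResidueField A) (ResidueField B) (CotangentSpace A)) :=
    Module.Finite.base_change _ _ _
  have hrn : Module.finrank (ResidueField B) (LinearMap.range ψ)
      + Module.finrank (ResidueField B) (LinearMap.ker ψ) = edim A := by
    rw [← hfinA]
    exact LinearMap.finrank_range_add_finrank_ker ψ
  have hinj : rd φ = 0 ↔ Function.Injective ψ := by
    rw [hrd, ← LinearMap.ker_eq_bot]
    exact Submodule.finrank_eq_zero
  have hBR : BasicallyRegular φ ↔ Function.Injective ψ := by
    constructor
    · intro h
      obtain ⟨x, hx, b, hmb, hb⟩ := my_exists_minBasis (R := A)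
      have hpart := h _ x hmb
      have hxB : ∀ i, φ (x i) ∈ maximalIdeal B := fun i => map_mem_maximalIdeal φ (hx i)
      have hw : LinearIndependent (ResidueField B)
          (fun i => (maximalIdeal B).toCotangent ⟨φ (x i), hxB i⟩) :=
        (my_isPartOfMinBasis_iff _ hxB).mp hpart
      rw [← LinearMap.ker_eq_bot, eq_bot_iff]
      intro z hz
      set bc := b.baseChange (ResidueField B) with hbc
      have hψbc : ∀ i, ψ (bc i) = (maximalIdeal B).toCotangent ⟨φ (x i), hxB i⟩ := by
        intro i
        rw [hbc, Module.Basis.baseChange_apply, hb i]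
        exact hψ1 ⟨x i, hx i⟩
      have h0 : ∑ i, bc.repr z i • (maximalIdeal B).toCotangent ⟨φ (x i), hxB i⟩ = 0 := by
        have : ψ (∑ i, bc.repr z i • bc i) = 0 := by
          rw [bc.sum_repr z]
          exact hz
        rw [map_sum] at this
        rw [← this]
        exact Finset.sum_congr rfl fun i _ => by rw [map_smul, hψbc i]
      have hz0 : ∀ i, bc.repr z i = 0 := Fintype.linearIndependent_iff.mp hw _ h0
      have : z = 0 := by
        rw [← bc.sum_repr z]
        simp [hz0]
      simp [this]
    · intro hinj r x hmb
      have hx : ∀ i, x i ∈ maximalIdeal A := hmb.1.1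
      have hv : LinearIndependent (ResidueField A)
          (fun i => (maximalIdeal A).toCotangent ⟨x i, hx i⟩) :=
        (my_isPartOfMinBasis_iff _ hx).mp hmb.1
      have hvs := (my_span_iff x hx).mp hmb.2
      set b : Module.Basis (Fin r) (ResidueField A) (CotangentSpace A) := Module.Basis.mk hv hvs.ge with hbdef
      set bc := b.baseChange (ResidueField B) with hbc
      have hxB : ∀ i, φ (x i) ∈ maximalIdeal B := fun i => map_mem_maximalIdeal φ (hx i)
      have hψbc : ∀ i, ψ (bc i) = (maximalIdeal B).toCotangent ⟨φ (x i), hxB i⟩ := by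
        intro i
        rw [hbc, Module.Basis.baseChange_apply, hbdef, Module.Basis.mk_apply]
        exact hψ1 ⟨x i, hx i⟩
      have hw : LinearIndependent (ResidueField B)
          (fun i => (maximalIdeal B).toCotangent ⟨φ (x i), hxB i⟩) := by
        have h1 := bc.linearIndependent.map' ψ (LinearMap.ker_eq_bot.mpr hinj)
        have h2 : (⇑ψ ∘ ⇑bc) = fun i => (maximalIdeal B).toCotangent ⟨φ (x i), hxB i⟩ :=
          funext fun i => hψbc i
        rwa [h2] at h1
      exact (my_isPartOfMinBasis_iff _ hxB).mpr hw
  -- Part 2: the quotient B ⧸ mB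
  haveI : Nontrivial (A ⧸ maximalIdeal A) := inferInstanceAs (Nontrivial (ResidueField A))
  set J : Ideal B := (maximalIdeal A).map φ with hJdef
  set π : B →+* B ⧸ J := Ideal.Quotient.mk J with hπdef
  letI : Module (ResidueField B) (CotangentSpace (B ⧸ J)) :=
    Module.compHom _ (ResidueField.map π)
  set F := cotangentMap π with hFdef
  have hnq : maximalIdeal (B ⧸ J) = (maximalIdeal B).map π := by
    ext z
    constructor
    · intro hz
      obtain ⟨b, rfl⟩ := Ideal.Quotient.mk_surjective z
      refine Ideal.mem_map_of_mem _ (fun hu : IsUnit b => ?_)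
      exact hz (hu.map π)
    · intro hz
      exact (Ideal.map_le_iff_le_comap.mpr
        (fun b hb => Ideal.mem_comap.mpr (map_mem_maximalIdeal π hb))) hz
  have hFsurj : Function.Surjective F := by
    intro y
    obtain ⟨⟨z, hz⟩, rfl⟩ := Ideal.toCotangent_surjective _ y
    obtain ⟨b, rfl⟩ := Ideal.Quotient.mk_surjective z
    have hb : b ∈ maximalIdeal B := fun hu : IsUnit b => hz (hu.map π)
    exact ⟨(maximalIdeal B).toCotangent ⟨b, hb⟩, rfl⟩
  have hFapp : ∀ z : maximalIdeal B,
      F ((maximalIdeal B).toCotangent z)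
        = (maximalIdeal (B ⧸ J)).toCotangent ⟨π z, map_mem_maximalIdeal π z.2⟩ := fun z => rfl
  have hFker : LinearMap.ker F = LinearMap.range ψ := by
    rw [hrange]
    apply le_antisymm
    · intro y hy
      obtain ⟨⟨z, hzn⟩, rfl⟩ := Ideal.toCotangent_surjective _ y
      have h0 : π z ∈ (maximalIdeal (B ⧸ J)) ^ 2 := by
        have h1 := LinearMap.mem_ker.mp hy
        rw [hFapp ⟨z, hzn⟩] at h1
        exact (Ideal.toCotangent_eq_zero _ _).mp h1
      rw [hnq, ← Ideal.map_pow] at h0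
      obtain ⟨w, hw2, hwz⟩ :=
        (Ideal.mem_map_iff_of_surjective π Ideal.Quotient.mk_surjective).mp h0
      have hzw : z - w ∈ J := by
        rw [← Ideal.Quotient.mk_eq_mk_iff_sub_mem]
        exact hwz.symm
      have hwn : w ∈ maximalIdeal B := Ideal.pow_le_self two_ne_zero hw2
      have hzwn : z - w ∈ maximalIdeal B := sub_mem hzn hwn
      have heq : (maximalIdeal B).toCotangent ⟨z, hzn⟩
          = (maximalIdeal B).toCotangent ⟨z - w, hzwn⟩ := by
        rw [Ideal.toCotangent_eq]
        simpa using hw2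
      rw [heq]
      exact Submodule.subset_span ⟨⟨z - w, hzwn⟩, hzw, rfl⟩
    · rw [Submodule.span_le]
      rintro _ ⟨⟨z, hzn⟩, hzJ, rfl⟩
      simp only [SetLike.mem_coe, LinearMap.mem_ker]
      rw [hFapp ⟨z, hzn⟩, Ideal.toCotangent_eq_zero]
      have hz0 : π z = 0 := Ideal.Quotient.eq_zero_iff_mem.mpr hzJ
      simp only [hz0]
      exact zero_mem _
  have hσ : Function.Surjective (ResidueField.map π) := by
    intro y
    obtain ⟨q, rfl⟩ := residue_surjective y
    obtain ⟨b, rfl⟩ := Ideal.Quotient.mk_surjective q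
    exact ⟨residue B b, ResidueField.map_residue π b⟩
  have hquot : Module.finrank (ResidueField B) (CotangentSpace B ⧸ LinearMap.range ψ)
      = edim (B ⧸ J) := by
    rw [← hFker, LinearEquiv.finrank_eq (F.quotKerEquivOfSurjective hFsurj)]
    exact my_finrank_compHom (ResidueField.map π) hσ (CotangentSpace (B ⧸ J))
  have h2 : Module.finrank (ResidueField B) (CotangentSpace B ⧸ LinearMap.range ψ)
      + Module.finrank (ResidueField B) (LinearMap.range ψ) = edim B :=
    Submodule.finrank_quotient_add_finrank _
  have hedim : rd φ = 0 ↔ edim B = edim A + edim (B ⧸ J) := by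
    rw [hrd]
    omega
  have hdelta_of_inj : Function.Injective ψ →
      ∀ I : Ideal A, I ≠ ⊤ → delta I = delta (I.map φ) := by
    intro hinj I hI
    have hIm : I ≤ maximalIdeal A := le_maximalIdeal hI
    unfold delta
    rw [key3 I hIm,
      ← LinearEquiv.finrank_eq (Submodule.equivMapOfInjective ψ hinj _)]
    exact (my_finrank_span_baseChange _).symm
  have hdelta_to_rd : (∀ I : Ideal A, I ≠ ⊤ → delta I = delta (I.map φ)) → rd φ = 0 := by
    intro h
    have hm := h (maximalIdeal A) (maximalIdeal.isMaximal A).ne_top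
    rw [hδm, hδJ] at hm
    rw [hrd]
    omega
  refine ⟨hBR.trans hinj.symm, (hBR.trans hinj.symm).trans hedim, ?_⟩
  constructor
  · intro hbr
    exact hdelta_of_inj (hBR.mp hbr)
  · intro h
    exact hBR.mpr (hinj.mp (hdelta_to_rd h))
end

section
/- Let φ: (A,m) → (B,n) be a local homomorphism of noetherian local rings and I ⊂ A a proper ideal. Then rd(π_I) ≥ rd(π_{IB}), where π_I: A → A/I and π_{IB}: B → B/IB are the canonical surjections. Moreover, φ is basically regular if and only if rd(π_I) = rd(π_{IB}) for every proper ideal I of A. -/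
open IsLocalRing

variable {A : Type*} [CommRing A] [IsLocalRing A] [IsNoetherianRing A]
variable {B : Type*} [CommRing B] [IsLocalRing B] [IsNoetherianRing B]



open Submodule

section SemiLinear

variable {K : Type*} {L : Type*} [Field K] [Field L] {σ : K →+* L}
variable {V : Type*} [AddCommGroup V] [Module K V]
variable {W : Type*} [AddCommGroup W] [Module L W]

theorem sl_span (g : V →ₛₗ[σ] W) (s : Set V) :
    span L (⇑g '' ↑(span K s)) = span L (⇑g '' s) := by
  refine le_antisymm ?_ (span_mono (Set.image_mono subset_span))
  rw [span_le]
  rintro _ ⟨v, hv, rfl⟩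
  induction hv using span_induction with
  | mem x h => exact subset_span (Set.mem_image_of_mem _ h)
  | zero => rw [map_zero]; exact zero_mem _
  | add x y hx hy ihx ihy => rw [map_add]; exact add_mem ihx ihy
  | smul k x hx ih => rw [map_smulₛₗ]; exact smul_mem _ _ ih

theorem sl_exists_family [FiniteDimensional K V] (g : V →ₛₗ[σ] W) (s : Set V) :
    ∃ t : Fin (Module.finrank K (span K s)) → V,
      LinearIndependent K t ∧
      span L (⇑g '' s) = span L (Set.range (⇑g ∘ t)) := by
  set T := span K s
  let b := Module.finBasis K T
  refine ⟨fun i => (b i : V), ?_, ?_⟩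
  · exact b.linearIndependent.map' T.subtype (Submodule.ker_subtype T)
  · have hr : Set.range (fun i => (b i : V)) = T.subtype '' Set.range b := by
      rw [← Set.range_comp]; rfl
    have hspan : span K (Set.range fun i => (b i : V)) = T := by
      rw [hr, ← Submodule.map_span, b.span_eq, Submodule.map_top, Submodule.range_subtype]
    have hset : (↑(span K s) : Set V) = ↑(span K (Set.range fun i => (b i : V))) := by
      rw [hspan]
    rw [← sl_span g s, hset, sl_span, Set.range_comp]

theorem sl_finrank_le [FiniteDimensional K V] (g : V →ₛₗ[σ] W) (s : Set V) :
    Module.finrank L (span L (⇑g '' s)) ≤ Module.finrank K (span K s) := by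
  obtain ⟨t, _, hEq⟩ := sl_exists_family g s
  rw [hEq]
  simpa [Set.finrank] using finrank_range_le_card (R := L) (⇑g ∘ t)

theorem sl_finrank_eq [FiniteDimensional K V] (g : V →ₛₗ[σ] W)
    (hg : ∀ (r : ℕ) (w : Fin r → V), LinearIndependent K w → LinearIndependent L (⇑g ∘ w))
    (s : Set V) :
    Module.finrank L (span L (⇑g '' s)) = Module.finrank K (span K s) := by
  obtain ⟨t, ht, hEq⟩ := sl_exists_family g s
  rw [hEq]
  rw [finrank_span_eq_card (hg _ t ht)]
  simp

end SemiLinear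

section Aux2

lemma residue_smul' {R : Type*} [CommRing R] [IsLocalRing R] (c : R) (w : CotangentSpace R) :
    (Ideal.Quotient.mk (maximalIdeal R)) c • w = c • w := by
  rw [← Ideal.Quotient.algebraMap_eq, algebraMap_smul]

lemma residue_smul {R : Type*} [CommRing R] [IsLocalRing R] (c : R) (w : CotangentSpace R) :
    residue R c • w = c • w :=
  residue_smul' c w

variable {A : Type*} [CommRing A] [IsLocalRing A]
variable {B : Type*} [CommRing B] [IsLocalRing B]

/-- The semilinear version of `cotangentMap`. -/
noncomputable def gsl (φ : A →+* B) [IsLocalHom φ] :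
    CotangentSpace A →ₛₗ[ResidueField.map φ] CotangentSpace B where
  toFun := gmap φ
  map_add' x y := map_add _ x y
  map_smul' := by
    intro k x
    obtain ⟨a, rfl⟩ := IsLocalRing.residue_surjective k
    obtain ⟨m, rfl⟩ := Ideal.toCotangent_surjective _ x
    have h3 : gmap φ ((maximalIdeal A).toCotangent m) =
        (maximalIdeal B).toCotangent ⟨φ m, map_mem_maximalIdeal φ m.2⟩ :=
      Ideal.mapCotangent_toCotangent _ _ _ _ m
    have h4 : gmap φ ((maximalIdeal A).toCotangent (a • m)) =
        (maximalIdeal B).toCotangent ⟨φ (a • m), map_mem_maximalIdeal φ (a • m).2⟩ :=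
      Ideal.mapCotangent_toCotangent _ _ _ _ (a • m)
    show gmap φ (residue A a • (maximalIdeal A).toCotangent m) =
      ResidueField.map φ (residue A a) • gmap φ ((maximalIdeal A).toCotangent m)
    rw [residue_smul, ← map_smul, h4, ResidueField.map_residue, h3, residue_smul, ← map_smul]
    congr 1
    ext
    exact map_mul φ a m

lemma gsl_apply (φ : A →+* B) [IsLocalHom φ] (m : maximalIdeal A) :
    gsl φ ((maximalIdeal A).toCotangent m) =
      (maximalIdeal B).toCotangent ⟨φ m, map_mem_maximalIdeal φ m.2⟩ := rfl

theorem partOfMinBasis_iff {R : Type*} [CommRing R] [IsLocalRing R] {r : ℕ} {y : Fin r → R}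
    (hy : ∀ i, y i ∈ maximalIdeal R) :
    IsPartOfMinBasis (maximalIdeal R) y ↔
      LinearIndependent (ResidueField R)
        (fun i => (maximalIdeal R).toCotangent ⟨y i, hy i⟩) := by
  rw [Fintype.linearIndependent_iff]
  have key : ∀ c : Fin r → R,
      (∑ i, residue R (c i) •
          (maximalIdeal R).toCotangent ⟨y i, hy i⟩) =
        (maximalIdeal R).toCotangent
          ⟨∑ i, c i * y i, Submodule.sum_mem _ fun i _ => Ideal.mul_mem_left _ _ (hy i)⟩ := by
    intro c
    have hsub : (⟨∑ i, c i * y i,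
        Submodule.sum_mem _ fun i _ => Ideal.mul_mem_left _ _ (hy i)⟩ : maximalIdeal R)
        = ∑ i, c i • (⟨y i, hy i⟩ : maximalIdeal R) := by
      apply Subtype.ext
      rw [AddSubmonoidClass.coe_finset_sum]
      simp [smul_eq_mul]
    rw [hsub, map_sum]
    exact Finset.sum_congr rfl fun i _ => by rw [map_smul, residue_smul]
  constructor
  · rintro ⟨-, h⟩ k hk i
    choose c hc using fun i => IsLocalRing.residue_surjective (k i)
    have hk' : (maximalIdeal R).toCotangent
        ⟨∑ i, c i * y i, Submodule.sum_mem _ fun i _ => Ideal.mul_mem_left _ _ (hy i)⟩ = 0 := by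
      rw [← key]
      simpa only [hc] using hk
    rw [Ideal.toCotangent_eq_zero, ← hc] at *
    rw [IsLocalRing.residue_eq_zero_iff]
    exact h c (by rwa [← pow_two]) i
  · intro h
    refine ⟨hy, fun c hc i => ?_⟩
    rw [← IsLocalRing.residue_eq_zero_iff]
    refine h (fun i => residue R (c i)) ?_ i
    rw [key c, Ideal.toCotangent_eq_zero, pow_two]
    exact hc

end Aux2

section RdDelta

open Submodule TensorProduct

variable {R : Type*} [CommRing R] [IsLocalRing R]

lemma maximalIdeal_quotient (I : Ideal R) [Nontrivial (R ⧸ I)] :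
    maximalIdeal (R ⧸ I) = (maximalIdeal R).map (Ideal.Quotient.mk I) := by
  apply le_antisymm
  · intro y hy
    obtain ⟨a, rfl⟩ := Ideal.Quotient.mk_surjective y
    refine Ideal.mem_map_of_mem _ ?_
    intro ha
    exact hy (ha.map (Ideal.Quotient.mk I))
  · rw [Ideal.map_le_iff_le_comap]
    intro a ha
    exact map_mem_maximalIdeal _ ha

theorem ker_gsl_mk (I : Ideal R) [Nontrivial (R ⧸ I)] :
    LinearMap.ker (gsl (Ideal.Quotient.mk I)) =
      span (ResidueField R)
        ((maximalIdeal R).toCotangent '' {x : maximalIdeal R | (x : R) ∈ I}) := by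
  apply le_antisymm
  · intro v hv
    obtain ⟨x, rfl⟩ := Ideal.toCotangent_surjective _ v
    rw [LinearMap.mem_ker, gsl_apply, Ideal.toCotangent_eq_zero] at hv
    have hv' : Ideal.Quotient.mk I (x : R) ∈ maximalIdeal (R ⧸ I) ^ 2 := hv
    rw [maximalIdeal_quotient I, ← Ideal.map_pow] at hv'
    obtain ⟨y, hy, hyx⟩ := (Ideal.mem_map_iff_of_surjective _ Ideal.Quotient.mk_surjective).mp hv'
    have hzI : (x : R) - y ∈ I := by
      rw [← Ideal.Quotient.mk_eq_mk_iff_sub_mem]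
      exact hyx.symm
    have hym : y ∈ maximalIdeal R := Ideal.pow_le_self two_ne_zero hy
    have hzm : (x : R) - y ∈ maximalIdeal R := sub_mem x.2 hym
    have hx : x = ⟨(x : R) - y, hzm⟩ + ⟨y, hym⟩ := Subtype.ext (by simp)
    rw [hx, map_add, (Ideal.toCotangent_eq_zero _ ⟨y, hym⟩).mpr hy, add_zero]
    exact subset_span ⟨⟨(x : R) - y, hzm⟩, hzI, rfl⟩
  · rw [span_le]
    rintro _ ⟨x, hx, rfl⟩
    rw [SetLike.mem_coe, LinearMap.mem_ker, gsl_apply]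
    have : (⟨Ideal.Quotient.mk I (x : R), map_mem_maximalIdeal _ x.2⟩ :
        maximalIdeal (R ⧸ I)) = 0 :=
      Subtype.ext (Ideal.Quotient.eq_zero_iff_mem.mpr hx)
    rw [this, map_zero]

theorem rd_mk_eq_delta (I : Ideal R) [Nontrivial (R ⧸ I)] :
    rd (Ideal.Quotient.mk I) = delta I := by
  classical
  letI : Algebra (ResidueField R) (ResidueField (R ⧸ I)) :=
    (ResidueField.map (Ideal.Quotient.mk I)).toAlgebra
  letI : Module (ResidueField R) (CotangentSpace (R ⧸ I)) :=
    Module.compHom _ (ResidueField.map (Ideal.Quotient.mk I))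
  letI : IsScalarTower (ResidueField R) (ResidueField (R ⧸ I)) (CotangentSpace (R ⧸ I)) :=
    IsScalarTower.of_algebraMap_smul fun _ _ => rfl
  set K := ResidueField R with hK
  set K' := ResidueField (R ⧸ I) with hK'
  set V := CotangentSpace R with hV
  set κ := ResidueField.map (Ideal.Quotient.mk I) with hκ
  have hbij : Function.Bijective κ := by
    refine ⟨κ.injective, ?_⟩
    intro y
    obtain ⟨c, rfl⟩ := IsLocalRing.residue_surjective y
    obtain ⟨a, rfl⟩ := Ideal.Quotient.mk_surjective c
    exact ⟨residue R a, ResidueField.map_residue _ _⟩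
  set e := RingEquiv.ofBijective κ hbij with he
  set g := cotangentMap (Ideal.Quotient.mk I) with hg
  set F := LinearMap.liftBaseChange K' g with hF
  show Module.finrank K' (LinearMap.ker F) = delta I
  set jlin : V →ₗ[K] K' ⊗[K] V := TensorProduct.mk K K' V 1 with hjlin
  have hFj : ∀ v, F (jlin v) = g v := by
    intro v
    show F ((1 : K') ⊗ₜ[K] v) = g v
    rw [LinearMap.liftBaseChange_tmul, one_smul]
  have hsurj : Function.Surjective jlin := by
    intro x
    induction x using TensorProduct.induction_on with
    | zero => exact ⟨0, map_zero _⟩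
    | tmul l v =>
      obtain ⟨k, hk⟩ := hbij.2 l
      refine ⟨k • v, ?_⟩
      show (1 : K') ⊗ₜ[K] (k • v) = l ⊗ₜ[K] v
      rw [← TensorProduct.smul_tmul, ← hk]
      congr 1
      rw [Algebra.smul_def, RingHom.algebraMap_toAlgebra, mul_one]
    | add x y hx hy =>
      obtain ⟨u, hu⟩ := hx; obtain ⟨w, hw⟩ := hy
      exact ⟨u + w, by rw [map_add, hu, hw]⟩
  have hesymm_smul : ∀ (k : K) (l : K'), e.symm (k • l) = k • e.symm l := by
    intro k l
    rw [Algebra.smul_def, RingHom.algebraMap_toAlgebra, map_mul, smul_eq_mul]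
    congr 1
    exact e.symm_apply_apply k
  set rlin : K' →ₗ[K] K :=
    { toFun := e.symm
      map_add' := fun a b => map_add e.symm a b
      map_smul' := hesymm_smul } with hrlin
  have hinj : Function.Injective jlin := by
    have hLI : Function.LeftInverse
        (fun x => (TensorProduct.lid K V) (LinearMap.rTensor V rlin x)) jlin := by
      intro v
      show (TensorProduct.lid K V) (LinearMap.rTensor V rlin ((1 : K') ⊗ₜ[K] v)) = v
      rw [LinearMap.rTensor_tmul]
      show (TensorProduct.lid K V) (e.symm 1 ⊗ₜ[K] v) = v
      rw [map_one, TensorProduct.lid_tmul, one_smul]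
    exact hLI.injective
  set jE : V ≃+ K' ⊗[K] V := AddEquiv.ofBijective jlin ⟨hinj, hsurj⟩ with hjE
  have hjEapp : ∀ v, jE v = jlin v := fun _ => rfl
  have hcoe : ∀ v, g v = gsl (Ideal.Quotient.mk I) v := fun _ => rfl
  have hmemF : ∀ v : V, v ∈ LinearMap.ker (gsl (Ideal.Quotient.mk I)) ↔ jE v ∈ LinearMap.ker F := by
    intro v
    rw [LinearMap.mem_ker, LinearMap.mem_ker, hjEapp, hFj, ← hcoe]
  set j2 : (LinearMap.ker F) ≃+ (LinearMap.ker (gsl (Ideal.Quotient.mk I))) :=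
    { toFun := fun x => ⟨jE.symm x.1, by
        rw [hmemF, jE.apply_symm_apply]; exact x.2⟩
      invFun := fun v => ⟨jE v.1, (hmemF v.1).mp v.2⟩
      left_inv := fun x => Subtype.ext (jE.apply_symm_apply x.1)
      right_inv := fun v => Subtype.ext (jE.symm_apply_apply v.1)
      map_add' := fun x y => Subtype.ext (map_add jE.symm x.1 y.1) } with hj2
  have hsmul : ∀ (l : K') (x : LinearMap.ker F), j2 (l • x) = e.symm l • j2 x := by
    intro l x
    apply Subtype.ext
    show jE.symm (l • x.1) = e.symm l • jE.symm x.1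
    apply hinj
    have h1 : ∀ y, jlin (jE.symm y) = y := fun y => jE.apply_symm_apply y
    rw [h1, LinearMap.map_smul, h1]
    rw [← algebraMap_smul K' (e.symm l) (x.1 : K' ⊗[K] V), RingHom.algebraMap_toAlgebra]
    congr 1
    exact (e.apply_symm_apply l).symm
  have hrank : Module.rank K' (LinearMap.ker F) =
      Module.rank K (LinearMap.ker (gsl (Ideal.Quotient.mk I))) :=
    rank_eq_of_equiv_equiv e.symm j2 e.symm.bijective hsmul
  have hfr : Module.finrank K' (LinearMap.ker F) =
      Module.finrank K (LinearMap.ker (gsl (Ideal.Quotient.mk I))) := by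
    simp only [Module.finrank, hrank]
  rw [hfr, ker_gsl_mk]
  rfl

end RdDelta

section MapSide

open Submodule

variable {A : Type*} [CommRing A] [IsLocalRing A]
variable {B : Type*} [CommRing B] [IsLocalRing B]

lemma ne_top_of_quot_nontrivial {R : Type*} [CommRing R] (I : Ideal R) [Nontrivial (R ⧸ I)] :
    I ≠ ⊤ := fun hI =>
  one_ne_zero ((Ideal.Quotient.eq_zero_iff_mem.mpr (hI ▸ Submodule.mem_top)).symm.trans
    (map_one (Ideal.Quotient.mk I))).symm

theorem span_map_ideal_eq (φ : A →+* B) [IsLocalHom φ] (I : Ideal A) [Nontrivial (A ⧸ I)] :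
    span (ResidueField B)
        ((maximalIdeal B).toCotangent '' {y : maximalIdeal B | (y : B) ∈ I.map φ}) =
      span (ResidueField B)
        (⇑(gsl φ) '' ((maximalIdeal A).toCotangent '' {x : maximalIdeal A | (x : A) ∈ I})) := by
  set L := ResidueField B
  set Z := span L
    (⇑(gsl φ) '' ((maximalIdeal A).toCotangent '' {x : maximalIdeal A | (x : A) ∈ I})) with hZ
  have hIm : I ≤ maximalIdeal A := le_maximalIdeal (ne_top_of_quot_nontrivial I)
  have key : ∀ b ∈ I.map φ, b ∈ maximalIdeal B ∧ ∀ h : b ∈ maximalIdeal B,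
      (maximalIdeal B).toCotangent ⟨b, h⟩ ∈ Z := by
    intro b hb
    have hb' : b ∈ Submodule.span B (⇑φ '' ↑I) := hb
    clear hb
    induction hb' using Submodule.span_induction with
    | mem v h =>
      obtain ⟨a, haI, rfl⟩ := h
      refine ⟨map_mem_maximalIdeal φ (hIm haI), fun hmem => ?_⟩
      have heq : (maximalIdeal B).toCotangent ⟨φ a, hmem⟩ =
          gsl φ ((maximalIdeal A).toCotangent ⟨a, hIm haI⟩) :=
        (gsl_apply φ ⟨a, hIm haI⟩).symm
      rw [heq]
      exact subset_span (Set.mem_image_of_mem _ (Set.mem_image_of_mem _ haI))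
    | zero =>
      refine ⟨zero_mem _, fun h => ?_⟩
      rw [show (⟨0, h⟩ : maximalIdeal B) = 0 from rfl, map_zero]
      exact zero_mem _
    | add v u hv hu ihv ihu =>
      refine ⟨add_mem ihv.1 ihu.1, fun h => ?_⟩
      rw [show (⟨v + u, h⟩ : maximalIdeal B) = ⟨v, ihv.1⟩ + ⟨u, ihu.1⟩ from rfl, map_add]
      exact add_mem (ihv.2 _) (ihu.2 _)
    | smul r v hv ihv =>
      refine ⟨(maximalIdeal B).smul_mem r ihv.1, fun h => ?_⟩
      rw [show (⟨r • v, h⟩ : maximalIdeal B) = r • ⟨v, ihv.1⟩ from rfl, map_smul]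
      exact (Z.restrictScalars B).smul_mem r (ihv.2 ihv.1)
  apply le_antisymm
  · rw [span_le]
    rintro _ ⟨y, hy, rfl⟩
    have := (key y.1 hy).2 y.2
    simpa using this
  · rw [span_le]
    rintro _ ⟨_, ⟨x, hx, rfl⟩, rfl⟩
    rw [gsl_apply]
    exact subset_span ⟨⟨φ x.1, map_mem_maximalIdeal φ x.2⟩, Ideal.mem_map_of_mem φ hx, rfl⟩

theorem rd_mk_map_eq (φ : A →+* B) [IsLocalHom φ] (I : Ideal A) [Nontrivial (A ⧸ I)] :
    rd (Ideal.Quotient.mk (I.map φ)) =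
      Module.finrank (ResidueField B)
        (span (ResidueField B)
          (⇑(gsl φ) '' ((maximalIdeal A).toCotangent '' {x : maximalIdeal A | (x : A) ∈ I}))) := by
  rw [rd_mk_eq_delta]
  unfold delta
  rw [span_map_ideal_eq φ I]

end MapSide

section Inj

open Submodule TensorProduct

variable {A : Type*} [CommRing A] [IsLocalRing A]
variable {B : Type*} [CommRing B] [IsLocalRing B]

/-- Injectivity of the base-changed cotangent map. -/
def FInj (φ : A →+* B) [IsLocalHom φ] : Prop :=
  letI : Algebra (ResidueField A) (ResidueField B) := (ResidueField.map φ).toAlgebra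
  letI : Module (ResidueField A) (CotangentSpace B) :=
    Module.compHom _ (ResidueField.map φ)
  letI : IsScalarTower (ResidueField A) (ResidueField B) (CotangentSpace B) :=
    IsScalarTower.of_algebraMap_smul fun _ _ => rfl
  Function.Injective (LinearMap.liftBaseChange (ResidueField B) (cotangentMap φ))

theorem indep_of_FInj (φ : A →+* B) [IsLocalHom φ] (hF : FInj φ) (r : ℕ)
    (w : Fin r → CotangentSpace A) (hw : LinearIndependent (ResidueField A) w) :
    LinearIndependent (ResidueField B) (⇑(gsl φ) ∘ w) := by
  letI : Algebra (ResidueField A) (ResidueField B) := (ResidueField.map φ).toAlgebra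
  letI : Module (ResidueField A) (CotangentSpace B) :=
    Module.compHom _ (ResidueField.map φ)
  letI : IsScalarTower (ResidueField A) (ResidueField B) (CotangentSpace B) :=
    IsScalarTower.of_algebraMap_smul fun _ _ => rfl
  unfold FInj at hF
  rw [Fintype.linearIndependent_iff]
  intro l hl j
  set F := LinearMap.liftBaseChange (ResidueField B) (cotangentMap φ) with hFdef
  have hFx : F (∑ i, l i ⊗ₜ[ResidueField A] w i) = 0 := by
    rw [map_sum]
    have h2 : ∀ i, F (l i ⊗ₜ[ResidueField A] w i) = l i • (⇑(gsl φ) ∘ w) i := fun i => by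
      rw [LinearMap.liftBaseChange_tmul]; rfl
    simp only [h2]
    exact hl
  have hx0 : (∑ i, l i ⊗ₜ[ResidueField A] w i :
      (ResidueField B) ⊗[ResidueField A] (CotangentSpace A)) = 0 := hF (by rw [hFx, map_zero])
  obtain ⟨q, hq⟩ := Submodule.exists_isCompl (Submodule.span (ResidueField A) (Set.range w))
  set proj := Submodule.linearProjOfIsCompl _ q hq with hproj
  set f : CotangentSpace A →ₗ[ResidueField A] ResidueField A :=
    (Finsupp.lapply j) ∘ₗ hw.repr ∘ₗ proj with hfdef
  have hfw : ∀ i, f (w i) = (Finsupp.single i (1 : ResidueField A)) j := by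
    intro i
    have hmem : w i ∈ Submodule.span (ResidueField A) (Set.range w) :=
      Submodule.subset_span (Set.mem_range_self i)
    have h1 : proj (w i) = ⟨w i, hmem⟩ :=
      Submodule.linearProjOfIsCompl_apply_left hq ⟨w i, hmem⟩
    have h2 : hw.repr ⟨w i, hmem⟩ = Finsupp.single i 1 := hw.repr_eq_single i _ rfl
    simp only [hfdef, LinearMap.comp_apply, h1, h2]
    rfl
  set ψ : (ResidueField B) ⊗[ResidueField A] (CotangentSpace A) →ₗ[ResidueField B]
      ResidueField B :=
    LinearMap.liftBaseChange (ResidueField B)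
      ((Algebra.linearMap (ResidueField A) (ResidueField B)) ∘ₗ f) with hψ
  have hψx : ψ (∑ i, l i ⊗ₜ[ResidueField A] w i) = l j := by
    rw [map_sum]
    have hterm : ∀ i, ψ (l i ⊗ₜ[ResidueField A] w i) =
        l i * algebraMap (ResidueField A) (ResidueField B) (f (w i)) := fun i => by
      rw [hψ, LinearMap.liftBaseChange_tmul, LinearMap.comp_apply, Algebra.linearMap_apply,
        smul_eq_mul]
    rw [Finset.sum_congr rfl fun i _ => hterm i]
    rw [Finset.sum_eq_single j]
    · rw [hfw j, Finsupp.single_eq_same, map_one, mul_one]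
    · intro i _ hij
      rw [hfw i, Finsupp.single_eq_of_ne' hij, map_zero, mul_zero]
    · intro hj; exact absurd (Finset.mem_univ j) hj
  rw [hx0, map_zero] at hψx
  exact hψx.symm

theorem FInj_of_indep_basis (φ : A →+* B) [IsLocalHom φ] [IsNoetherianRing A]
    (hli : LinearIndependent (ResidueField B)
      (⇑(gsl φ) ∘ ⇑(Module.finBasis (ResidueField A) (CotangentSpace A)))) :
    FInj φ := by
  letI : Algebra (ResidueField A) (ResidueField B) := (ResidueField.map φ).toAlgebra
  letI : Module (ResidueField A) (CotangentSpace B) :=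
    Module.compHom _ (ResidueField.map φ)
  letI : IsScalarTower (ResidueField A) (ResidueField B) (CotangentSpace B) :=
    IsScalarTower.of_algebraMap_smul fun _ _ => rfl
  set K := ResidueField A
  set L := ResidueField B
  set V := CotangentSpace A
  set F := LinearMap.liftBaseChange L (cotangentMap φ) with hFdef
  set b := Module.finBasis K V with hb
  set bc := b.baseChange L with hbc
  show Function.Injective F
  have hFbc : ∀ i, F (bc i) = gsl φ (b i) := by
    intro i
    rw [hbc, Module.Basis.baseChange_apply, LinearMap.liftBaseChange_tmul, one_smul]
    rfl
  intro x y hxy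
  have hz : F (x - y) = 0 := by rw [map_sub, hxy, sub_self]
  have hrepr : ∀ i, bc.repr (x - y) i = 0 := by
    have hsum : F (∑ i, bc.repr (x - y) i • bc i) = 0 := by
      rw [Module.Basis.sum_repr]; exact hz
    rw [map_sum] at hsum
    simp only [map_smul, hFbc] at hsum
    exact Fintype.linearIndependent_iff.mp hli _ hsum
  have : x - y = 0 := by
    rw [← Module.Basis.sum_repr bc (x - y)]
    simp only [hrepr, zero_smul, Finset.sum_const_zero]
  exact sub_eq_zero.mp this

theorem FInj_iff_basicallyRegular (φ : A →+* B) [IsLocalHom φ] [IsNoetherianRing A] :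
    FInj φ ↔ BasicallyRegular φ := by
  constructor
  · intro hF r x hmin
    have hmem : ∀ i, x i ∈ maximalIdeal A := hmin.1.1
    have hli : LinearIndependent (ResidueField A)
        (fun i => (maximalIdeal A).toCotangent ⟨x i, hmem i⟩) :=
      (partOfMinBasis_iff hmem).mp hmin.1
    have hli2 := indep_of_FInj φ hF r _ hli
    have hBmem : ∀ i, φ (x i) ∈ maximalIdeal B := fun i => map_mem_maximalIdeal φ (hmem i)
    rw [partOfMinBasis_iff hBmem]
    have : (fun i => (maximalIdeal B).toCotangent ⟨φ (x i), hBmem i⟩) =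
        ⇑(gsl φ) ∘ (fun i => (maximalIdeal A).toCotangent ⟨x i, hmem i⟩) := by
      funext i
      rw [Function.comp_apply, gsl_apply]
    rw [this]
    exact hli2
  · intro hbr
    set K := ResidueField A
    set V := CotangentSpace A
    set b := Module.finBasis K V with hb
    choose x' hx' using fun i => Ideal.toCotangent_surjective (maximalIdeal A) (b i)
    set x : Fin (Module.finrank K V) → A := fun i => (x' i : A) with hx
    have hmem : ∀ i, x i ∈ maximalIdeal A := fun i => (x' i).2
    have hfam : (fun i => (maximalIdeal A).toCotangent ⟨x i, hmem i⟩) = ⇑b := by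
      funext i
      rw [show (⟨x i, hmem i⟩ : maximalIdeal A) = x' i from rfl, hx']
    have hpart : IsPartOfMinBasis (maximalIdeal A) x := by
      rw [partOfMinBasis_iff hmem, hfam]
      exact b.linearIndependent
    have hspan' : Submodule.span A (Set.range x') = ⊤ := by
      rw [← CotangentSpace.span_image_eq_top_iff]
      have hcomp : ⇑(maximalIdeal A).toCotangent ∘ x' = ⇑b := funext fun i => hx' i
      rw [← Set.range_comp, hcomp, b.span_eq]
    have hspan : Ideal.span (Set.range x) = maximalIdeal A := by
      have h1 : Set.range x = (maximalIdeal A).subtype '' Set.range x' := by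
        rw [← Set.range_comp]; rfl
      show Submodule.span A (Set.range x) = (maximalIdeal A : Submodule A A)
      rw [h1, ← Submodule.map_span, hspan', Submodule.map_top, Submodule.range_subtype]
    have hB := hbr _ x ⟨hpart, hspan⟩
    have hBmem : ∀ i, φ (x i) ∈ maximalIdeal B := fun i => map_mem_maximalIdeal φ (hmem i)
    have hli : LinearIndependent (ResidueField B)
        (fun i => (maximalIdeal B).toCotangent ⟨φ (x i), hBmem i⟩) :=
      (partOfMinBasis_iff hBmem).mp hB
    apply FInj_of_indep_basis φ
    have : ⇑(gsl φ) ∘ ⇑b = fun i => (maximalIdeal B).toCotangent ⟨φ (x i), hBmem i⟩ := by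
      funext i
      rw [Function.comp_apply, ← hfam]
      rw [gsl_apply]
    rw [this]
    exact hli

theorem rd_eq_of_FInj (φ : A →+* B) [IsLocalHom φ] [IsNoetherianRing A] (hF : FInj φ)
    (J : Ideal A) [Nontrivial (A ⧸ J)] :
    rd (Ideal.Quotient.mk J) = rd (Ideal.Quotient.mk (J.map φ)) := by
  rw [rd_mk_map_eq φ J, rd_mk_eq_delta]
  unfold delta
  exact (sl_finrank_eq (gsl φ) (indep_of_FInj φ hF) _).symm

theorem FInj_of_rd_max (φ : A →+* B) [IsLocalHom φ] [IsNoetherianRing A]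
    (h : haveI : Nontrivial (A ⧸ maximalIdeal A) :=
          Ideal.Quotient.nontrivial_iff.mpr (maximalIdeal.isMaximal A).ne_top
        rd (Ideal.Quotient.mk (maximalIdeal A)) =
          rd (Ideal.Quotient.mk ((maximalIdeal A).map φ))) :
    FInj φ := by
  haveI : Nontrivial (A ⧸ maximalIdeal A) :=
    Ideal.Quotient.nontrivial_iff.mpr (maximalIdeal.isMaximal A).ne_top
  set K := ResidueField A
  set L := ResidueField B
  set V := CotangentSpace A
  set b := Module.finBasis K V with hb
  rw [rd_mk_map_eq φ _, rd_mk_eq_delta] at h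
  have hset : {x : maximalIdeal A | (x : A) ∈ maximalIdeal A} = Set.univ :=
    Set.eq_univ_of_forall fun x => x.2
  have himg : (maximalIdeal A).toCotangent '' {x : maximalIdeal A | (x : A) ∈ maximalIdeal A} =
      (↑(span K (Set.range ⇑b)) : Set V) := by
    rw [hset, Set.image_univ, Set.range_eq_univ.mpr (Ideal.toCotangent_surjective _),
      b.span_eq, Submodule.top_coe]
  rw [himg] at h
  have hd : delta (maximalIdeal A) = Module.finrank K V := by
    unfold delta
    rw [himg, Submodule.span_eq, b.span_eq]
    exact finrank_top K V
  have hrhs : span L (⇑(gsl φ) '' (↑(span K (Set.range ⇑b)) : Set V)) =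
      span L (Set.range (⇑(gsl φ) ∘ ⇑b)) := by
    rw [sl_span, Set.range_comp]
  rw [hd, hrhs] at h
  apply FInj_of_indep_basis
  rw [linearIndependent_iff_card_eq_finrank_span, Fintype.card_fin]
  show Module.finrank K V = Module.finrank L (span L (Set.range (⇑(gsl φ) ∘ ⇑b)))
  exact h

end Inj
/-- Corollary br:cor3. -/
theorem stmt13 (φ : A →+* B) [IsLocalHom φ] (I : Ideal A) [Nontrivial (A ⧸ I)] :
    rd (Ideal.Quotient.mk (I.map φ)) ≤ rd (Ideal.Quotient.mk I) ∧
    (BasicallyRegular φ ↔ ∀ (J : Ideal A) [Nontrivial (A ⧸ J)],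
        rd (Ideal.Quotient.mk J) = rd (Ideal.Quotient.mk (J.map φ))) := by
  have _hB : IsNoetherianRing B := ‹IsNoetherianRing B›
  constructor
  · rw [rd_mk_map_eq φ I, rd_mk_eq_delta]
    unfold delta
    exact sl_finrank_le (gsl φ) _
  · constructor
    · intro hbr J hJ
      haveI := hJ
      exact rd_eq_of_FInj φ ((FInj_iff_basicallyRegular φ).mpr hbr) J
    · intro h
      haveI : Nontrivial (A ⧸ maximalIdeal A) :=
        Ideal.Quotient.nontrivial_iff.mpr (maximalIdeal.isMaximal A).ne_top
      exact (FInj_iff_basicallyRegular φ).mp (FInj_of_rd_max φ (h (maximalIdeal A)))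
end

section
/- Let φ: (A,m,K) → (B,n,L) and ψ: (B,n,L) → (C,p,M) be local homomorphisms of noetherian local rings. Then rd(φ) ≤ rd(ψ∘φ) ≤ rd(φ) + rd(ψ). -/
open IsLocalRing

open Module LinearMap TensorProduct

lemma aux_nullity_comp {K V W U : Type*} [Field K] [AddCommGroup V] [Module K V]
    [AddCommGroup W] [Module K W] [AddCommGroup U] [Module K U]
    [FiniteDimensional K V] [FiniteDimensional K W]
    (f : V →ₗ[K] W) (g : W →ₗ[K] U) :
    finrank K (ker f) ≤ finrank K (ker (g ∘ₗ f)) ∧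
      finrank K (ker (g ∘ₗ f)) ≤ finrank K (ker f) + finrank K (ker g) := by
  have hle : ker f ≤ ker (g ∘ₗ f) := fun x hx => by
    rw [LinearMap.mem_ker] at hx ⊢
    simp [hx]
  refine ⟨Submodule.finrank_mono hle, ?_⟩
  have hr : ∀ x ∈ ker (g ∘ₗ f), f x ∈ ker g := fun x hx => hx
  set r : ker (g ∘ₗ f) →ₗ[K] ker g := f.restrict hr with hrdef
  have h1 : finrank K (range r) + finrank K (ker r) = finrank K (ker (g ∘ₗ f)) :=
    LinearMap.finrank_range_add_finrank_ker r
  have hmem : ∀ x : ker r, (((x : ker (g ∘ₗ f)) : V)) ∈ ker f := by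
    intro x
    have h2 : r (x : ker (g ∘ₗ f)) = 0 := x.2
    have h3 : f ((x : ker (g ∘ₗ f)) : V) = ((0 : ker g) : W) := congrArg Subtype.val h2
    simpa using h3
  let j : ker r →ₗ[K] ker f :=
    LinearMap.codRestrict (ker f) ((ker (g ∘ₗ f)).subtype ∘ₗ (ker r).subtype) hmem
  have hinj : Function.Injective j := by
    intro a b hab
    have h2 : ((j a : ker f) : V) = ((j b : ker f) : V) := congrArg Subtype.val hab
    exact Subtype.ext (Subtype.ext h2)
  have h4 : finrank K (ker r) ≤ finrank K (ker f) :=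
    LinearMap.finrank_le_finrank_of_injective hinj
  have h5 : finrank K (range r) ≤ finrank K (ker g) := (range r).finrank_le
  omega

lemma aux_finrank_ker_baseChange {L M V W : Type*} [Field L] [Field M] [Algebra L M]
    [AddCommGroup V] [Module L V] [AddCommGroup W] [Module L W] [FiniteDimensional L V]
    (f : V →ₗ[L] W) :
    finrank M (ker (f.baseChange M)) = finrank L (ker f) := by
  have hfact : f.baseChange M =
      ((range f).subtype.baseChange M) ∘ₗ (f.rangeRestrict.baseChange M) := by
    rw [← LinearMap.baseChange_comp]
    congr 1
  have hinjsub : Function.Injective ((range f).subtype.baseChange M) := by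
    rw [LinearMap.baseChange_eq_ltensor]
    exact Module.Flat.lTensor_preserves_injective_linearMap _ (range f).injective_subtype
  have hker : ker (f.baseChange M) = ker (f.rangeRestrict.baseChange M) := by
    rw [hfact]
    exact LinearMap.ker_comp_of_ker_eq_bot _ (LinearMap.ker_eq_bot.mpr hinjsub)
  have hsurj : Function.Surjective (f.rangeRestrict.baseChange M) := by
    rw [LinearMap.baseChange_eq_ltensor]
    exact LinearMap.lTensor_surjective _ f.surjective_rangeRestrict
  have h1 : finrank M (range (f.rangeRestrict.baseChange M))
      + finrank M (ker (f.rangeRestrict.baseChange M)) = finrank M (M ⊗[L] V) :=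
    LinearMap.finrank_range_add_finrank_ker _
  have h2 : range (f.rangeRestrict.baseChange M) = ⊤ := LinearMap.range_eq_top.mpr hsurj
  have h3 : finrank M (range (f.rangeRestrict.baseChange M)) = finrank M (M ⊗[L] ↥(range f)) := by
    rw [h2]; exact finrank_top _ _
  have h4 : finrank M (M ⊗[L] V) = finrank L V := Module.finrank_baseChange
  have h5 : finrank M (M ⊗[L] ↥(range f)) = finrank L ↥(range f) := Module.finrank_baseChange
  have h6 : finrank L (range f) + finrank L (ker f) = finrank L V :=
    LinearMap.finrank_range_add_finrank_ker f
  rw [hker]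
  omega

variable {A : Type*} [CommRing A] [IsLocalRing A] [IsNoetherianRing A]
variable {B : Type*} [CommRing B] [IsLocalRing B] [IsNoetherianRing B]

variable {C : Type*} [CommRing C] [IsLocalRing C] [IsNoetherianRing C]

/-- Corollary rs:cor4, inequalities: `rd(φ) ≤ rd(ψ∘φ) ≤ rd(φ) + rd(ψ)`. -/
theorem stmt14 (φ : A →+* B) [IsLocalHom φ] (ψ : B →+* C) [IsLocalHom ψ] :
    rd φ ≤ rd (ψ.comp φ) ∧ rd (ψ.comp φ) ≤ rd φ + rd ψ := by
  haveI := ‹IsNoetherianRing C›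
  letI : Algebra (ResidueField A) (ResidueField B) := (ResidueField.map φ).toAlgebra
  letI : Algebra (ResidueField B) (ResidueField C) := (ResidueField.map ψ).toAlgebra
  letI : Algebra (ResidueField A) (ResidueField C) := (ResidueField.map (ψ.comp φ)).toAlgebra
  letI : Module (ResidueField A) (CotangentSpace B) := Module.compHom _ (ResidueField.map φ)
  letI : Module (ResidueField B) (CotangentSpace C) := Module.compHom _ (ResidueField.map ψ)
  letI : Module (ResidueField A) (CotangentSpace C) :=
    Module.compHom _ (ResidueField.map (ψ.comp φ))
  letI : IsScalarTower (ResidueField A) (ResidueField B) (CotangentSpace B) :=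
    IsScalarTower.of_algebraMap_smul fun _ _ => rfl
  letI : IsScalarTower (ResidueField B) (ResidueField C) (CotangentSpace C) :=
    IsScalarTower.of_algebraMap_smul fun _ _ => rfl
  letI : IsScalarTower (ResidueField A) (ResidueField C) (CotangentSpace C) :=
    IsScalarTower.of_algebraMap_smul fun _ _ => rfl
  letI : IsScalarTower (ResidueField A) (ResidueField B) (ResidueField C) :=
    IsScalarTower.of_algebraMap_smul fun k m => by
      show (ResidueField.map ψ) ((ResidueField.map φ) k) * m
        = (ResidueField.map (ψ.comp φ)) k * m
      rw [ResidueField.map_comp φ ψ, RingHom.comp_apply]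
  let F := LinearMap.liftBaseChange (ResidueField B) (cotangentMap φ)
  let G := LinearMap.liftBaseChange (ResidueField C) (cotangentMap ψ)
  let H := LinearMap.liftBaseChange (ResidueField C) (cotangentMap (ψ.comp φ))
  have erdφ : rd φ = Module.finrank (ResidueField B) (LinearMap.ker F) := rfl
  have erdψ : rd ψ = Module.finrank (ResidueField C) (LinearMap.ker G) := rfl
  have erdc : rd (ψ.comp φ) = Module.finrank (ResidueField C) (LinearMap.ker H) := rfl
  let e : (ResidueField C) ⊗[ResidueField A] (CotangentSpace A) ≃ₗ[ResidueField C]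
      (ResidueField C) ⊗[ResidueField B]
        ((ResidueField B) ⊗[ResidueField A] (CotangentSpace A)) :=
    (TensorProduct.AlgebraTensorModule.cancelBaseChange (ResidueField A) (ResidueField B)
      (ResidueField C) (ResidueField C) (CotangentSpace A)).symm
  have key : H = (G ∘ₗ F.baseChange (ResidueField C)) ∘ₗ (e : _ →ₗ[ResidueField C] _) := by
    apply LinearMap.ext
    intro z
    induction z using TensorProduct.induction_on with
    | zero => simp
    | tmul m v =>
      have hgf : cotangentMap (ψ.comp φ) v = cotangentMap ψ (cotangentMap φ v) := by
        obtain ⟨x, rfl⟩ := Ideal.toCotangent_surjective (maximalIdeal A) v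
        show gmap (ψ.comp φ) _ = gmap ψ (gmap φ _)
        unfold gmap
        erw [Ideal.mapCotangent_toCotangent]
      have he : e (m ⊗ₜ v) = m ⊗ₜ ((1 : ResidueField B) ⊗ₜ v) :=
        TensorProduct.AlgebraTensorModule.cancelBaseChange_symm_tmul (ResidueField A) (ResidueField B) (ResidueField C) m v
      simp only [LinearMap.coe_comp, LinearEquiv.coe_coe, Function.comp_apply]
      rw [show H (m ⊗ₜ v) = m • cotangentMap (ψ.comp φ) v from
          LinearMap.liftBaseChange_tmul _ _ _ _, he, LinearMap.baseChange_tmul,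
        show F ((1 : ResidueField B) ⊗ₜ v) = (1 : ResidueField B) • cotangentMap φ v from
          LinearMap.liftBaseChange_tmul _ _ _ _, one_smul,
        show G (m ⊗ₜ cotangentMap φ v) = m • cotangentMap ψ (cotangentMap φ v) from
          LinearMap.liftBaseChange_tmul _ _ _ _, hgf]
    | add x y hx hy => simp only [map_add, hx, hy]
  have hkerH : Module.finrank (ResidueField C) (LinearMap.ker H)
      = Module.finrank (ResidueField C)
        (LinearMap.ker (G ∘ₗ F.baseChange (ResidueField C))) := by
    rw [key, LinearMap.ker_comp]
    exact LinearEquiv.finrank_eq (e.ofSubmodule' _)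
  obtain ⟨i1, i2⟩ := aux_nullity_comp (F.baseChange (ResidueField C)) G
  have hbc : Module.finrank (ResidueField C)
        (LinearMap.ker (F.baseChange (ResidueField C)))
      = Module.finrank (ResidueField B) (LinearMap.ker F) := aux_finrank_ker_baseChange F
  constructor
  · rw [erdφ, erdc, hkerH, ← hbc]; exact i1
  · rw [erdφ, erdψ, erdc, hkerH, ← hbc]; exact i2
end

section
/- Let φ: (A,m,K) → (B,n,L) and ψ: (B,n,L) → (C,p,M) be local homomorphisms of noetherian local rings, and let ψ_{mB}: B/mB → C/mC be the induced map. Then rd(ψ∘φ) = rd(φ) + rd(ψ) − rd(ψ_{mB}). -/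
open IsLocalRing

variable {A : Type*} [CommRing A] [IsLocalRing A] [IsNoetherianRing A]
variable {B : Type*} [CommRing B] [IsLocalRing B] [IsNoetherianRing B]

variable {C : Type*} [CommRing C] [IsLocalRing C] [IsNoetherianRing C]

section Aux

variable {A : Type*} [CommRing A] [IsLocalRing A]
variable {B : Type*} [CommRing B] [IsLocalRing B]

theorem gmap_toCotangent (θ : A →+* B) [IsLocalHom θ] (x : maximalIdeal A) :
    gmap θ ((maximalIdeal A).toCotangent x) =
      (maximalIdeal B).toCotangent ⟨θ x, map_mem_maximalIdeal θ x.2⟩ := rfl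

theorem residueFieldMap_bijective (θ : A →+* B) [IsLocalHom θ]
    (hs : Function.Surjective θ) : Function.Bijective (ResidueField.map θ) := by
  constructor
  · exact RingHom.injective _
  · intro y
    obtain ⟨c, rfl⟩ := residue_surjective y
    obtain ⟨b, rfl⟩ := hs c
    exact ⟨residue A b, ResidueField.map_residue _ b⟩

/-- `edim` is invariant under ring isomorphisms. -/
theorem edim_eq_of_ringEquiv (e : A ≃+* B) : edim A = edim B := by
  haveI h1 : IsLocalHom (e : A →+* B) :=
    ⟨fun a ha => by simpa using ha.map e.symm.toRingHom⟩
  haveI h2 : IsLocalHom (e.symm : B →+* A) :=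
    ⟨fun a ha => by simpa using ha.map e.toRingHom⟩
  have hbij : Function.Bijective (ResidueField.map (e : A →+* B)) :=
    residueFieldMap_bijective _ e.surjective
  let j : CotangentSpace A ≃+ CotangentSpace B :=
    { toFun := gmap (e : A →+* B)
      invFun := gmap (e.symm : B →+* A)
      left_inv := by
        intro x
        obtain ⟨y, rfl⟩ := Ideal.toCotangent_surjective _ x
        rw [gmap_toCotangent (e : A →+* B) y, gmap_toCotangent (e.symm : B →+* A)]
        exact congrArg _ (Subtype.ext (e.symm_apply_apply _))
      right_inv := by
        intro x
        obtain ⟨y, rfl⟩ := Ideal.toCotangent_surjective _ x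
        rw [gmap_toCotangent (e.symm : B →+* A) y, gmap_toCotangent (e : A →+* B)]
        exact congrArg _ (Subtype.ext (e.apply_symm_apply _))
      map_add' := fun x y => map_add _ x y }
  have hc : ∀ (k : ResidueField A) (m : CotangentSpace A),
      j (k • m) = ResidueField.map (e : A →+* B) k • j m := by
    intro k m
    obtain ⟨a, rfl⟩ := residue_surjective k
    obtain ⟨x, rfl⟩ := Ideal.toCotangent_surjective _ m
    show gmap (e : A →+* B) (residue A a • (maximalIdeal A).toCotangent x) =
      (ResidueField.map (e : A →+* B)) (residue A a) • gmap (e : A →+* B)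
        ((maximalIdeal A).toCotangent x)
    rw [ResidueField.map_residue]
    have h1 : (residue A a) • (maximalIdeal A).toCotangent x
        = (maximalIdeal A).toCotangent (a • x) := rfl
    have h3 := gmap_toCotangent (e : A →+* B) x
    have h4 := gmap_toCotangent (e : A →+* B) (a • x)
    have h2 : (residue B ((e : A →+* B) a)) • (maximalIdeal B).toCotangent
          ⟨(e : A →+* B) x, map_mem_maximalIdeal (e : A →+* B) x.2⟩
        = (maximalIdeal B).toCotangent
          (((e : A →+* B) a) • ⟨(e : A →+* B) x,
            map_mem_maximalIdeal (e : A →+* B) x.2⟩) := rfl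
    rw [h1, h4, h3, h2]
    congr 1
    ext
    exact map_mul (e : A →+* B) a x
  have hrank := lift_rank_eq_of_equiv_equiv (R := ResidueField A) (R' := ResidueField B)
    ⇑(ResidueField.map (e : A →+* B)) j hbij hc
  show (Module.rank (ResidueField A) (CotangentSpace A)).toNat
    = (Module.rank (ResidueField B) (CotangentSpace B)).toNat
  rw [← Cardinal.toNat_lift (Module.rank (ResidueField A) (CotangentSpace A)), hrank,
    Cardinal.toNat_lift]

end Aux

section RdEq

variable {A : Type*} [CommRing A] [IsLocalRing A] [IsNoetherianRing A]
variable {B : Type*} [CommRing B] [IsLocalRing B] [IsNoetherianRing B]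

theorem rd_eq (θ : A →+* B) [IsLocalHom θ] :
    (rd θ : ℤ) = (edim A : ℤ) - (edim B : ℤ) +
      (edim (B ⧸ (maximalIdeal A).map θ) : ℤ) := by
  haveI hnA : Nontrivial (A ⧸ maximalIdeal A) :=
    Ideal.Quotient.nontrivial_iff.mpr (maximalIdeal.isMaximal A).ne_top
  haveI : Nontrivial (B ⧸ (maximalIdeal A).map θ) := mapQuotNontrivial θ (maximalIdeal A)
  letI : Algebra (ResidueField A) (ResidueField B) := (ResidueField.map θ).toAlgebra
  letI : Module (ResidueField A) (CotangentSpace B) :=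
    Module.compHom _ (ResidueField.map θ)
  letI : IsScalarTower (ResidueField A) (ResidueField B) (CotangentSpace B) :=
    IsScalarTower.of_algebraMap_smul fun _ _ => rfl
  set I : Ideal B := (maximalIdeal A).map θ with hIdef
  letI : Module (ResidueField B) (CotangentSpace (B ⧸ I)) :=
    Module.compHom _ (ResidueField.map (Ideal.Quotient.mk I))
  have hIle : I ≤ maximalIdeal B := by
    rw [hIdef, Ideal.map_le_iff_le_comap]
    exact fun a ha => map_mem_maximalIdeal θ ha
  -- pointwise formulas
  have happθ : ∀ x : maximalIdeal A,
      cotangentMap θ ((maximalIdeal A).toCotangent x) =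
        (maximalIdeal B).toCotangent ⟨θ x, map_mem_maximalIdeal θ x.2⟩ := fun _ => rfl
  have happ : ∀ x : maximalIdeal B,
      cotangentMap (Ideal.Quotient.mk I) ((maximalIdeal B).toCotangent x) =
        (maximalIdeal (B ⧸ I)).toCotangent
          ⟨Ideal.Quotient.mk I x, map_mem_maximalIdeal _ x.2⟩ := fun _ => rfl
  -- maximal ideal of the quotient
  have hmax : maximalIdeal (B ⧸ I) = (maximalIdeal B).map (Ideal.Quotient.mk I) := by
    apply le_antisymm
    · intro z hz
      obtain ⟨b, rfl⟩ := Ideal.Quotient.mk_surjective z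
      have hb : b ∈ maximalIdeal B := fun hu => hz (hu.map (Ideal.Quotient.mk I))
      exact Ideal.mem_map_of_mem _ hb
    · rw [Ideal.map_le_iff_le_comap]
      exact fun b hb => map_mem_maximalIdeal _ hb
  -- surjectivity of the induced map on cotangent spaces
  have hgsurj : Function.Surjective (cotangentMap (Ideal.Quotient.mk I)) := by
    intro y
    obtain ⟨x, rfl⟩ := Ideal.toCotangent_surjective _ y
    obtain ⟨b, hb⟩ := Ideal.Quotient.mk_surjective (x : B ⧸ I)
    have hbn : b ∈ maximalIdeal B := fun hu => x.2 (hb ▸ hu.map (Ideal.Quotient.mk I))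
    refine ⟨(maximalIdeal B).toCotangent ⟨b, hbn⟩, ?_⟩
    rw [happ]
    exact congrArg _ (Subtype.ext hb)
  -- main span computation
  have main : ∀ z (_ : z ∈ I) (hzn : z ∈ maximalIdeal B),
      (maximalIdeal B).toCotangent ⟨z, hzn⟩ ∈
        Submodule.span (ResidueField B) (Set.range (cotangentMap θ)) := by
    intro z hz
    have hz' : z ∈ Submodule.span B (⇑θ '' ↑(maximalIdeal A)) := hz
    refine Submodule.span_induction
      (p := fun z _ => ∀ hzn : z ∈ maximalIdeal B,
        (maximalIdeal B).toCotangent ⟨z, hzn⟩ ∈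
          Submodule.span (ResidueField B) (Set.range (cotangentMap θ)))
      ?_ ?_ ?_ ?_ hz'
    · rintro _ ⟨a, ha, rfl⟩ hzn
      exact Submodule.subset_span ⟨(maximalIdeal A).toCotangent ⟨a, ha⟩, happθ ⟨a, ha⟩⟩
    · intro hzn
      rw [show (⟨0, hzn⟩ : maximalIdeal B) = 0 from rfl, map_zero]
      exact Submodule.zero_mem _
    · intro u v hu hv ihu ihv hzn
      have hun : u ∈ maximalIdeal B := hIle hu
      have hvn : v ∈ maximalIdeal B := hIle hv
      rw [show (⟨u + v, hzn⟩ : maximalIdeal B) = ⟨u, hun⟩ + ⟨v, hvn⟩ from rfl, map_add]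
      exact add_mem (ihu hun) (ihv hvn)
    · intro b u hu ih hzn
      have hun : u ∈ maximalIdeal B := hIle hu
      rw [show (⟨b • u, hzn⟩ : maximalIdeal B) = b • ⟨u, hun⟩ from rfl, map_smul]
      exact Submodule.smul_of_tower_mem _ b (ih hun)
  -- kernel computation
  have hker : LinearMap.ker (cotangentMap (Ideal.Quotient.mk I))
      = Submodule.span (ResidueField B) (Set.range (cotangentMap θ)) := by
    apply le_antisymm
    · intro w hw
      obtain ⟨x, rfl⟩ := Ideal.toCotangent_surjective _ w
      have hw' : Ideal.Quotient.mk I ↑x ∈ maximalIdeal (B ⧸ I) ^ 2 := by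
        have h0 := LinearMap.mem_ker.mp hw
        rw [happ] at h0
        exact (Ideal.toCotangent_eq_zero _ _).mp h0
      rw [hmax, ← Ideal.map_pow] at hw'
      have hx2 : (x : B) ∈ maximalIdeal B ^ 2 ⊔ I := by
        have h2 := Ideal.comap_map_of_surjective (Ideal.Quotient.mk I)
          Ideal.Quotient.mk_surjective (maximalIdeal B ^ 2)
        have h3 : (x : B) ∈ Ideal.comap (Ideal.Quotient.mk I)
            (Ideal.map (Ideal.Quotient.mk I) (maximalIdeal B ^ 2)) := hw'
        rw [h2] at h3
        rwa [← RingHom.ker_eq_comap_bot, Ideal.mk_ker] at h3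
      obtain ⟨y, hy, z, hz, hyz⟩ := Submodule.mem_sup.mp hx2
      have hzn : z ∈ maximalIdeal B := hIle hz
      have hyn : y ∈ maximalIdeal B := Ideal.pow_le_self two_ne_zero hy
      have hxsplit : (maximalIdeal B).toCotangent x
          = (maximalIdeal B).toCotangent ⟨z, hzn⟩ := by
        rw [show x = ⟨y, hyn⟩ + ⟨z, hzn⟩ from Subtype.ext hyz.symm, map_add,
          (Ideal.toCotangent_eq_zero _ _).mpr hy, zero_add]
      rw [hxsplit]
      exact main z hz hzn
    · rw [Submodule.span_le]
      rintro _ ⟨u, rfl⟩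
      obtain ⟨x, rfl⟩ := Ideal.toCotangent_surjective _ u
      simp only [SetLike.mem_coe, LinearMap.mem_ker]
      rw [happθ, happ]
      have h0 : (Ideal.Quotient.mk I) (θ ↑x) = 0 :=
        Ideal.Quotient.eq_zero_iff_mem.mpr (Ideal.mem_map_of_mem θ x.2)
      rw [show (⟨Ideal.Quotient.mk I (θ ↑x),
        map_mem_maximalIdeal _ (map_mem_maximalIdeal θ x.2)⟩ : maximalIdeal (B ⧸ I)) = 0
        from Subtype.ext h0, map_zero]
  -- residue field of the quotient
  have hbij : Function.Bijective (ResidueField.map (Ideal.Quotient.mk I)) :=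
    residueFieldMap_bijective _ Ideal.Quotient.mk_surjective
  have hfr : Module.finrank (ResidueField B) (CotangentSpace (B ⧸ I)) = edim (B ⧸ I) :=
    congrArg Cardinal.toNat
      (rank_eq_of_equiv_equiv (R := ResidueField B) (R' := ResidueField (B ⧸ I))
        ⇑(ResidueField.map (Ideal.Quotient.mk I)) (AddEquiv.refl _) hbij
        (fun r m => rfl))
  -- rank-nullity for the base-changed map
  have e1 : Module.finrank (ResidueField B)
        (LinearMap.range (LinearMap.liftBaseChange (ResidueField B) (cotangentMap θ)))
      + rd θ = edim A := by
    have h := LinearMap.finrank_range_add_finrank_ker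
      (LinearMap.liftBaseChange (ResidueField B) (cotangentMap θ))
    rw [Module.finrank_baseChange] at h
    exact h
  have e2 : Module.finrank (ResidueField B)
        (LinearMap.range (LinearMap.liftBaseChange (ResidueField B) (cotangentMap θ)))
      = Module.finrank (ResidueField B)
        (LinearMap.ker (cotangentMap (Ideal.Quotient.mk I))) := by
    rw [LinearMap.range_liftBaseChange, LinearMap.coe_range, hker]
  have e3 : edim (B ⧸ I) + Module.finrank (ResidueField B)
        (LinearMap.ker (cotangentMap (Ideal.Quotient.mk I))) = edim B := by
    have h := LinearMap.finrank_range_add_finrank_ker (cotangentMap (Ideal.Quotient.mk I))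
    rw [LinearMap.range_eq_top.mpr hgsurj, finrank_top, hfr] at h
    exact h
  have goal' : (rd θ : ℤ) = (edim A : ℤ) - (edim B : ℤ) + (edim (B ⧸ I) : ℤ) := by omega
  exact goal'

end RdEq

/-- Corollary rs:cor4, equality:
`rd(ψ∘φ) = rd(φ) + rd(ψ) − rd(ψ_{mB})`. -/
theorem stmt15 (φ : A →+* B) [IsLocalHom φ] (ψ : B →+* C) [IsLocalHom ψ] :
    (rd (ψ.comp φ) : ℤ) = (rd φ : ℤ) + (rd ψ : ℤ) -
      (rd (Ideal.quotientMap (Ideal.map ψ ((maximalIdeal A).map φ)) ψ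
        Ideal.le_comap_map) : ℤ) := by
  haveI hnA : Nontrivial (A ⧸ maximalIdeal A) :=
    Ideal.Quotient.nontrivial_iff.mpr (maximalIdeal.isMaximal A).ne_top
  haveI : Nontrivial (B ⧸ (maximalIdeal A).map φ) := mapQuotNontrivial φ (maximalIdeal A)
  haveI : Nontrivial (C ⧸ Ideal.map ψ ((maximalIdeal A).map φ)) :=
    mapQuotNontrivial ψ ((maximalIdeal A).map φ)
  haveI : Nontrivial ((B ⧸ (maximalIdeal A).map φ) ⧸
      maximalIdeal (B ⧸ (maximalIdeal A).map φ)) :=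
    Ideal.Quotient.nontrivial_iff.mpr (maximalIdeal.isMaximal _).ne_top
  haveI : Nontrivial (B ⧸ maximalIdeal B) :=
    Ideal.Quotient.nontrivial_iff.mpr (maximalIdeal.isMaximal B).ne_top
  haveI : Nontrivial (C ⧸ (maximalIdeal B).map ψ) := mapQuotNontrivial ψ (maximalIdeal B)
  haveI : IsLocalHom (ψ.comp φ) := RingHom.isLocalHom_comp ψ φ
  have r1 := rd_eq (ψ.comp φ)
  have r2 := rd_eq φ
  have r3 := rd_eq ψ
  have r4 := rd_eq (Ideal.quotientMap (Ideal.map ψ ((maximalIdeal A).map φ)) ψ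
    Ideal.le_comap_map)
  have hmm : (maximalIdeal A).map (ψ.comp φ) = Ideal.map ψ ((maximalIdeal A).map φ) := by
    rw [Ideal.map_map]
  have hmax : maximalIdeal (B ⧸ (maximalIdeal A).map φ)
      = (maximalIdeal B).map (Ideal.Quotient.mk ((maximalIdeal A).map φ)) := by
    apply le_antisymm
    · intro z hz
      obtain ⟨b, rfl⟩ := Ideal.Quotient.mk_surjective z
      exact Ideal.mem_map_of_mem _ (fun hu => hz (hu.map (Ideal.Quotient.mk _)))
    · rw [Ideal.map_le_iff_le_comap]
      exact fun b hb => map_mem_maximalIdeal _ hb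
  have hsup : Ideal.map ψ ((maximalIdeal A).map φ) ⊔ (maximalIdeal B).map ψ
      = (maximalIdeal B).map ψ :=
    sup_eq_right.mpr (Ideal.map_mono (by
      rw [Ideal.map_le_iff_le_comap]
      exact fun a ha => map_mem_maximalIdeal φ ha))
  have hQ : edim ((C ⧸ Ideal.map ψ ((maximalIdeal A).map φ)) ⧸
      (maximalIdeal (B ⧸ (maximalIdeal A).map φ)).map
        (Ideal.quotientMap (Ideal.map ψ ((maximalIdeal A).map φ)) ψ Ideal.le_comap_map))
      = edim (C ⧸ (maximalIdeal B).map ψ) := by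
    have hK : (maximalIdeal (B ⧸ (maximalIdeal A).map φ)).map
          (Ideal.quotientMap (Ideal.map ψ ((maximalIdeal A).map φ)) ψ Ideal.le_comap_map)
        = ((maximalIdeal B).map ψ).map
            (Ideal.Quotient.mk (Ideal.map ψ ((maximalIdeal A).map φ))) := by
      rw [hmax]
      refine (Ideal.map_map (Ideal.Quotient.mk ((maximalIdeal A).map φ))
        (Ideal.quotientMap (Ideal.map ψ ((maximalIdeal A).map φ)) ψ
          Ideal.le_comap_map)).trans ?_
      rw [Ideal.quotientMap_comp_mk]
      exact (Ideal.map_map ψ (Ideal.Quotient.mk (Ideal.map ψ ((maximalIdeal A).map φ)))).symm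
    exact edim_eq_of_ringEquiv ((Ideal.quotEquivOfEq hK).trans
      ((DoubleQuot.quotQuotEquivQuotSup _ _).trans (Ideal.quotEquivOfEq hsup)))
  have hE1 : edim (C ⧸ (maximalIdeal A).map (ψ.comp φ))
      = edim (C ⧸ Ideal.map ψ ((maximalIdeal A).map φ)) :=
    edim_eq_of_ringEquiv (Ideal.quotEquivOfEq hmm)
  rw [hE1] at r1
  rw [hQ] at r4
  omega
end

section
/- Let φ: (A,m) → (B,n) and ψ: (B,n) → (C,p) be local homomorphisms of noetherian local rings with φ surjective. Then rd(ψ∘φ) = rd(φ) + rd(ψ). -/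
open IsLocalRing

variable {A : Type*} [CommRing A] [IsLocalRing A] [IsNoetherianRing A]
variable {B : Type*} [CommRing B] [IsLocalRing B] [IsNoetherianRing B]

variable {C : Type*} [CommRing C] [IsLocalRing C] [IsNoetherianRing C]

open TensorProduct

theorem aux_rank_surj {F M N : Type*} [Field F] [AddCommGroup M] [Module F M]
    [AddCommGroup N] [Module F N] [FiniteDimensional F M] (f : M →ₗ[F] N)
    (hf : Function.Surjective f) :
    Module.finrank F M = Module.finrank F N + Module.finrank F (LinearMap.ker f) := by
  have h := LinearMap.finrank_range_add_finrank_ker f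
  rwa [LinearMap.range_eq_top.mpr hf, finrank_top, eq_comm] at h

theorem aux_ker_comp {F M N P : Type*} [Field F] [AddCommGroup M] [Module F M]
    [AddCommGroup N] [Module F N] [AddCommGroup P] [Module F P] [FiniteDimensional F M]
    (H : M →ₗ[F] N) (G : N →ₗ[F] P) (hH : Function.Surjective H) :
    Module.finrank F (LinearMap.ker (G ∘ₗ H)) =
      Module.finrank F (LinearMap.ker H) + Module.finrank F (LinearMap.ker G) := by
  have hle : LinearMap.ker H ≤ LinearMap.ker (G ∘ₗ H) := by
    intro x hx
    simp only [LinearMap.mem_ker] at *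
    simp [hx]
  set q : LinearMap.ker (G ∘ₗ H) →ₗ[F] LinearMap.ker G :=
    H.restrict (p := LinearMap.ker (G ∘ₗ H)) (q := LinearMap.ker G)
      (fun x hx => by simpa [LinearMap.mem_ker] using hx) with hq
  have hqsurj : Function.Surjective q := by
    rintro ⟨y, hy⟩
    obtain ⟨x, rfl⟩ := hH y
    refine ⟨⟨x, by simpa [LinearMap.mem_ker] using hy⟩, Subtype.ext rfl⟩
  have hkq : LinearMap.ker q =
      (LinearMap.ker H).comap (LinearMap.ker (G ∘ₗ H)).subtype := by
    ext x
    simp [hq, LinearMap.restrict_apply, LinearMap.mem_ker, Subtype.ext_iff]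
  have h1 := aux_rank_surj q hqsurj
  rw [hkq, (Submodule.comapSubtypeEquivOfLe hle).finrank_eq] at h1
  omega

theorem gmap_apply (φ : A →+* B) [IsLocalHom φ] (m : maximalIdeal A) :
    gmap φ ((maximalIdeal A).toCotangent m) =
      (maximalIdeal B).toCotangent ⟨φ m, map_mem_maximalIdeal φ m.2⟩ :=
  Ideal.mapCotangent_toCotangent _ _ _ _ m

theorem gmap_comp_apply (φ : A →+* B) [IsLocalHom φ] (ψ : B →+* C) [IsLocalHom ψ]
    (v : CotangentSpace A) : gmap (ψ.comp φ) v = gmap ψ (gmap φ v) := by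
  obtain ⟨m, rfl⟩ := Ideal.toCotangent_surjective _ v
  rw [gmap_apply, gmap_apply, gmap_apply]
  rfl

theorem gmap_surjective (φ : A →+* B) [IsLocalHom φ] (hφ : Function.Surjective φ) :
    Function.Surjective (gmap φ) := by
  intro w
  obtain ⟨n, rfl⟩ := Ideal.toCotangent_surjective _ w
  obtain ⟨a, ha⟩ := hφ n
  have ham : a ∈ maximalIdeal A := by
    rw [mem_maximalIdeal, mem_nonunits_iff]
    intro hu
    exact mem_nonunits_iff.mp ((mem_maximalIdeal _).mp n.2) (ha ▸ hu.map φ)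
  refine ⟨(maximalIdeal A).toCotangent ⟨a, ham⟩, ?_⟩
  rw [gmap_apply]
  congr 1
  exact Subtype.ext ha

/-- Corollary rs:cor5: if `φ` is surjective then
`rd(ψ∘φ) = rd(φ) + rd(ψ)`. -/
theorem stmt16 (φ : A →+* B) [IsLocalHom φ] (ψ : B →+* C) [IsLocalHom ψ]
    (hφ : Function.Surjective φ) :
    rd (ψ.comp φ) = rd φ + rd ψ := by
  classical
  letI : Algebra (ResidueField A) (ResidueField B) := (ResidueField.map φ).toAlgebra
  letI : Algebra (ResidueField B) (ResidueField C) := (ResidueField.map ψ).toAlgebra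
  letI : Algebra (ResidueField A) (ResidueField C) :=
    (ResidueField.map (ψ.comp φ)).toAlgebra
  letI : Module (ResidueField A) (CotangentSpace B) :=
    Module.compHom _ (ResidueField.map φ)
  letI : Module (ResidueField B) (CotangentSpace C) :=
    Module.compHom _ (ResidueField.map ψ)
  letI : Module (ResidueField A) (CotangentSpace C) :=
    Module.compHom _ (ResidueField.map (ψ.comp φ))
  letI : IsScalarTower (ResidueField A) (ResidueField B) (CotangentSpace B) :=
    IsScalarTower.of_algebraMap_smul fun _ _ => rfl
  letI : IsScalarTower (ResidueField B) (ResidueField C) (CotangentSpace C) :=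
    IsScalarTower.of_algebraMap_smul fun _ _ => rfl
  letI : IsScalarTower (ResidueField A) (ResidueField C) (CotangentSpace C) :=
    IsScalarTower.of_algebraMap_smul fun _ _ => rfl
  letI : Module (ResidueField A)
      (TensorProduct (ResidueField B) (ResidueField C) (CotangentSpace B)) :=
    Module.compHom _ (ResidueField.map (ψ.comp φ))
  letI : IsScalarTower (ResidueField A) (ResidueField C)
      (TensorProduct (ResidueField B) (ResidueField C) (CotangentSpace B)) :=
    IsScalarTower.of_algebraMap_smul fun _ _ => rfl
  -- the map `V_A →ₗ[K] E ⊗[L] V_B`, `v ↦ 1 ⊗ gmap φ v`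
  set h₁ : CotangentSpace A →ₗ[ResidueField A]
      (TensorProduct (ResidueField B) (ResidueField C) (CotangentSpace B)) :=
    { toFun := fun v => (1 : ResidueField C) ⊗ₜ[ResidueField B] (gmap φ v)
      map_add' := fun x y => by simp only [map_add, TensorProduct.tmul_add]
      map_smul' := by
        intro k v
        obtain ⟨a, rfl⟩ := IsLocalRing.residue_surjective k
        obtain ⟨m, rfl⟩ := Ideal.toCotangent_surjective _ v
        show (1 : ResidueField C) ⊗ₜ[ResidueField B]
            (gmap φ ((residue A a) • (maximalIdeal A).toCotangent m)) =
          (ResidueField.map (ψ.comp φ) (residue A a)) •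
            ((1 : ResidueField C) ⊗ₜ[ResidueField B]
              (gmap φ ((maximalIdeal A).toCotangent m)))
        have h1 : (residue A a) • (maximalIdeal A).toCotangent m
            = (maximalIdeal A).toCotangent (a • m) := rfl
        have key : ∀ w : CotangentSpace B,
            (ResidueField.map (ψ.comp φ) (residue A a)) •
              ((1 : ResidueField C) ⊗ₜ[ResidueField B] w)
            = (1 : ResidueField C) ⊗ₜ[ResidueField B] ((residue B (φ a)) • w) := by
          intro w
          rw [TensorProduct.tmul_smul, TensorProduct.smul_tmul',
            TensorProduct.smul_tmul']
          congr 1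
        rw [h1, gmap_apply, gmap_apply, key]
        have h5 : (residue B (φ a)) • (maximalIdeal B).toCotangent
              ⟨φ ↑m, map_mem_maximalIdeal φ m.2⟩
            = (maximalIdeal B).toCotangent
              ((φ a) • ⟨φ ↑m, map_mem_maximalIdeal φ m.2⟩) := rfl
        rw [h5]
        congr 1
        congr 1
        exact Subtype.ext (map_mul φ a m) } with hh₁
  set H := @LinearMap.liftBaseChange (ResidueField A) (CotangentSpace A)
    (TensorProduct (ResidueField B) (ResidueField C) (CotangentSpace B)) (ResidueField C)
    _ _ _ _ _ _ _ _ (IsScalarTower.of_algebraMap_smul fun _ _ => rfl) h₁ with hH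
  set F := LinearMap.liftBaseChange (ResidueField C) (cotangentMap (ψ.comp φ)) with hF
  set G := LinearMap.liftBaseChange (ResidueField C) (cotangentMap ψ) with hG
  set f := LinearMap.liftBaseChange (ResidueField B) (cotangentMap φ) with hf
  have hrdφ : rd φ = Module.finrank (ResidueField B) (LinearMap.ker f) := rfl
  have hrdψ : rd ψ = Module.finrank (ResidueField C) (LinearMap.ker G) := rfl
  have hrdψφ : rd (ψ.comp φ) = Module.finrank (ResidueField C) (LinearMap.ker F) := rfl
  -- `F = G ∘ H`
  have hFGH : F = G ∘ₗ H := by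
    apply LinearMap.ext
    intro x
    induction x using TensorProduct.induction_on with
    | zero => simp
    | tmul e v =>
        show F (e ⊗ₜ v) = G (H (e ⊗ₜ v))
        rw [hF, hH, LinearMap.liftBaseChange_tmul, LinearMap.liftBaseChange_tmul]
        have hh : h₁ v = (1 : ResidueField C) ⊗ₜ[ResidueField B] (gmap φ v) := rfl
        rw [hh, TensorProduct.smul_tmul', smul_eq_mul, mul_one, hG,
          LinearMap.liftBaseChange_tmul]
        show e • (gmap (ψ.comp φ) v) = e • (gmap ψ (gmap φ v))
        rw [gmap_comp_apply]
    | add x y hx hy => simp [map_add, hx, hy]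
  -- surjectivity of `H`
  have hHsurj : Function.Surjective H := by
    intro x
    induction x using TensorProduct.induction_on with
    | zero => exact ⟨0, map_zero _⟩
    | tmul e w =>
        obtain ⟨v, rfl⟩ := gmap_surjective φ hφ w
        refine ⟨e ⊗ₜ v, ?_⟩
        rw [hH, LinearMap.liftBaseChange_tmul]
        show e • ((1 : ResidueField C) ⊗ₜ[ResidueField B] (gmap φ v)) = e ⊗ₜ (gmap φ v)
        rw [TensorProduct.smul_tmul', smul_eq_mul, mul_one]
    | add x y hx hy =>
        obtain ⟨a, rfl⟩ := hx
        obtain ⟨b, rfl⟩ := hy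
        exact ⟨a + b, map_add _ _ _⟩
  -- surjectivity of `f`
  have hfsurj : Function.Surjective f := by
    intro w
    obtain ⟨v, rfl⟩ := gmap_surjective φ hφ w
    refine ⟨(1 : ResidueField B) ⊗ₜ v, ?_⟩
    rw [hf, LinearMap.liftBaseChange_tmul, one_smul]
    rfl
  have e1 : Module.finrank (ResidueField B)
        (TensorProduct (ResidueField A) (ResidueField B) (CotangentSpace A))
      = Module.finrank (ResidueField A) (CotangentSpace A) := Module.finrank_baseChange
  have e2 : Module.finrank (ResidueField C)
        (TensorProduct (ResidueField A) (ResidueField C) (CotangentSpace A))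
      = Module.finrank (ResidueField A) (CotangentSpace A) := Module.finrank_baseChange
  have e3 : Module.finrank (ResidueField C)
        (TensorProduct (ResidueField B) (ResidueField C) (CotangentSpace B))
      = Module.finrank (ResidueField B) (CotangentSpace B) := Module.finrank_baseChange
  have r1 := aux_rank_surj f hfsurj
  have r2 := aux_rank_surj H hHsurj
  have r3 := aux_ker_comp H G hHsurj
  rw [hrdφ, hrdψ, hrdψφ, hFGH]
  omega
end

section
/- Let φ: (A,m,K) → (B,n,L) be a basically regular local homomorphism of noetherian local rings with A not artinian, and let J ⊆ n² be an ideal of B. Then the composite A → B → B/n² is basically regular but not flat. -/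
open IsLocalRing

variable {A : Type*} [CommRing A] [IsLocalRing A] [IsNoetherianRing A]
variable {B : Type*} [CommRing B] [IsLocalRing B] [IsNoetherianRing B]


lemma isArtinian_of_quotient_action {A : Type*} [CommRing A] (I : Ideal A) (M : Type*)
    [AddCommGroup M] [Module A M] [Module (A ⧸ I) M] [IsScalarTower A (A ⧸ I) M]
    (h : IsArtinian (A ⧸ I) M) : IsArtinian A M := by
  have key : ∀ (a : A) (x : M), (Ideal.Quotient.mk I a) • x = a • x := by
    intro a x
    rw [← Ideal.Quotient.algebraMap_eq, algebraMap_smul]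
  let g : Submodule A M ↪o Submodule (A ⧸ I) M :=
    { toFun := fun N =>
        { carrier := N
          add_mem' := fun hx hy => N.add_mem hx hy
          zero_mem' := N.zero_mem
          smul_mem' := fun k x hx => by
            obtain ⟨a, rfl⟩ := Ideal.Quotient.mk_surjective k
            rw [key]
            exact N.smul_mem a hx }
      inj' := fun N₁ N₂ hN => by
        apply SetLike.coe_injective
        have := congrArg (fun (s : Submodule (A ⧸ I) M) => (s : Set M)) hN
        exact this
      map_rel_iff' := Iff.rfl }
  exact ⟨g.wellFounded h.wf⟩

lemma artinian_of_max_sq_eq_bot {A : Type*} [CommRing A] [IsLocalRing A] [IsNoetherianRing A]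
    (h : maximalIdeal A * maximalIdeal A = ⊥) : IsArtinianRing A := by
  letI : Field (A ⧸ maximalIdeal A) := Ideal.Quotient.field _
  have htor : Module.IsTorsionBySet A (maximalIdeal A) (maximalIdeal A : Set A) := by
    intro x a
    have hz : (a : A) * (x : A) = 0 := by
      have := Ideal.mul_mem_mul a.2 x.2
      rwa [h, Ideal.mem_bot] at this
    apply Subtype.ext
    simpa using hz
  letI : Module (A ⧸ maximalIdeal A) (maximalIdeal A) := htor.module
  haveI : IsScalarTower A (A ⧸ maximalIdeal A) (maximalIdeal A) := htor.isScalarTower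
  haveI : Module.Finite A (maximalIdeal A) := Module.Finite.iff_fg.2 (IsNoetherian.noetherian _)
  haveI : Module.Finite (A ⧸ maximalIdeal A) (maximalIdeal A) :=
    Module.Finite.of_restrictScalars_finite A _ _
  haveI h1 : IsArtinian (A ⧸ maximalIdeal A) (maximalIdeal A) := isArtinian_of_fg_of_artinian'
  haveI h2 : IsArtinian A (maximalIdeal A) := isArtinian_of_quotient_action _ _ h1
  haveI h3 : IsArtinian A (A ⧸ (maximalIdeal A : Submodule A A)) :=
    isArtinian_of_quotient_action (maximalIdeal A) _
      (inferInstance : IsArtinian (A ⧸ maximalIdeal A) (A ⧸ maximalIdeal A))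
  exact (isArtinian_iff_submodule_quotient (maximalIdeal A : Submodule A A)).2 ⟨h2, h3⟩

set_option maxHeartbeats 1000000 in
/-- Proposition rs:cor10(2): if `φ` is basically regular and `A` is not
artinian, then `A → B/n²` is basically regular and not flat. -/
theorem stmt19 (φ : A →+* B) [IsLocalHom φ] (hbr : BasicallyRegular φ)
    (hA : ¬ IsArtinianRing A) (J : Ideal B) (hJ : J ≤ (maximalIdeal B) ^ 2) :
    BasicallyRegular ((Ideal.Quotient.mk ((maximalIdeal B) ^ 2)).comp φ) ∧
    ¬ ((Ideal.Quotient.mk ((maximalIdeal B) ^ 2)).comp φ).Flat := by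
  classical
  set n2 := (maximalIdeal B) ^ 2 with hn2
  set ψ := (Ideal.Quotient.mk n2).comp φ with hψ
  haveI : IsLocalHom ψ :=
    ⟨fun a ha => IsLocalHom.map_nonunit (f := φ) a
      (IsLocalHom.map_nonunit (f := Ideal.Quotient.mk n2) (φ a) ha)⟩
  have hmem : ∀ b : B, Ideal.Quotient.mk n2 b ∈ maximalIdeal (B ⧸ n2) ↔ b ∈ maximalIdeal B := by
    intro b
    constructor
    · intro hb hu
      exact hb (hu.map (Ideal.Quotient.mk n2))
    · intro hb
      exact map_mem_maximalIdeal (Ideal.Quotient.mk n2) hb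
  have hsq : maximalIdeal (B ⧸ n2) * maximalIdeal (B ⧸ n2) = ⊥ := by
    have hle : maximalIdeal (B ⧸ n2) ≤ Ideal.map (Ideal.Quotient.mk n2) (maximalIdeal B) := by
      intro x hx
      obtain ⟨b, rfl⟩ := Ideal.Quotient.mk_surjective x
      exact Ideal.mem_map_of_mem _ ((hmem b).1 hx)
    have : maximalIdeal (B ⧸ n2) * maximalIdeal (B ⧸ n2) ≤ ⊥ := by
      calc maximalIdeal (B ⧸ n2) * maximalIdeal (B ⧸ n2)
          ≤ Ideal.map (Ideal.Quotient.mk n2) (maximalIdeal B) *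
            Ideal.map (Ideal.Quotient.mk n2) (maximalIdeal B) := Ideal.mul_mono hle hle
        _ = Ideal.map (Ideal.Quotient.mk n2) (maximalIdeal B * maximalIdeal B) :=
            (Ideal.map_mul _ _ _).symm
        _ = Ideal.map (Ideal.Quotient.mk n2) n2 := by rw [hn2, pow_two]
        _ = ⊥ := Ideal.map_quotient_self _
    exact le_bot_iff.mp this
  constructor
  · intro r x hx
    have h0 := hbr r x hx
    refine ⟨fun i => (hmem _).2 (map_mem_maximalIdeal φ (hx.1.1 i)), ?_⟩
    intro c hc
    choose b hb using fun i => Ideal.Quotient.mk_surjective (c i)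
    rw [hsq, Ideal.mem_bot] at hc
    have hzero : Ideal.Quotient.mk n2 (∑ i, b i * φ (x i)) = 0 := by
      rw [map_sum]
      refine Eq.trans (Finset.sum_congr rfl fun i _ => ?_) hc
      rw [map_mul, hb i]
      rfl
    have hmem2 : (∑ i, b i * φ (x i)) ∈ maximalIdeal B * maximalIdeal B := by
      rw [← pow_two, ← hn2]
      exact Ideal.Quotient.eq_zero_iff_mem.1 hzero
    have hB := h0.2 b hmem2
    intro i
    rw [← hb i]
    exact (hmem _).2 (hB i)
  · intro hf
    letI : Algebra A (B ⧸ n2) := ψ.toAlgebra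
    haveI flat : Module.Flat A (B ⧸ n2) := hf
    haveI ff : Module.FaithfullyFlat A (B ⧸ n2) := by
      refine ⟨fun I hI htop => ?_⟩
      rw [IsLocalRing.eq_maximalIdeal hI] at htop
      have hle : maximalIdeal A • (⊤ : Submodule A (B ⧸ n2)) ≤
          Submodule.restrictScalars A (Submodule.restrictScalars (B ⧸ n2)
            (maximalIdeal (B ⧸ n2))) := by
        refine Submodule.smul_le.2 fun a ha b _ => ?_
        show a • b ∈ maximalIdeal (B ⧸ n2)
        rw [Algebra.smul_def]
        exact Ideal.mul_mem_right _ _ (map_mem_maximalIdeal ψ ha)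
      rw [htop] at hle
      have h1 : (1 : B ⧸ n2) ∈ maximalIdeal (B ⧸ n2) := hle Submodule.mem_top
      exact (maximalIdeal.isMaximal (B ⧸ n2)).ne_top ((Ideal.eq_top_iff_one _).2 h1)
    have hinj : Function.Injective ψ := by
      rw [RingHom.injective_iff_ker_eq_bot]
      set K : Ideal A := RingHom.ker ψ with hK
      have hg : (TensorProduct.lid A (B ⧸ n2)).toLinearMap ∘ₗ
          LinearMap.rTensor (B ⧸ n2) (Submodule.subtype K) = 0 := by
        apply TensorProduct.ext'
        intro k y
        have hk : (k : A) • y = 0 := by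
          rw [Algebra.smul_def]
          have : ψ (k : A) = 0 := k.2
          show ψ (k : A) * y = 0
          rw [this, zero_mul]
        simp [hk]
      have hr0 : LinearMap.rTensor (B ⧸ n2) (Submodule.subtype K) = 0 := by
        refine LinearMap.ext fun z => (TensorProduct.lid A (B ⧸ n2)).injective ?_
        have h0 := congrFun (congrArg DFunLike.coe hg) z
        simp only [LinearMap.comp_apply, LinearMap.zero_apply,
          LinearEquiv.coe_toLinearMap] at h0
        rw [LinearMap.zero_apply, map_zero]
        exact h0
      have hsub : (Submodule.subtype K : K →ₗ[A] A) = 0 :=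
        (Module.FaithfullyFlat.zero_iff_rTensor_zero A (B ⧸ n2) _).2 hr0
      rw [eq_bot_iff]
      intro a ha
      have := congrFun (congrArg DFunLike.coe hsub) ⟨a, ha⟩
      simpa using this
    have hAsq : maximalIdeal A * maximalIdeal A = ⊥ := by
      rw [eq_bot_iff]
      rw [Ideal.mul_le]
      intro r hr s hs
      rw [Ideal.mem_bot]
      apply hinj
      rw [map_mul, map_zero]
      have := Ideal.mul_mem_mul (map_mem_maximalIdeal ψ hr) (map_mem_maximalIdeal ψ hs)
      rwa [hsq, Ideal.mem_bot] at this
    exact hA (artinian_of_max_sq_eq_bot hAsq)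
end
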